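/- arXiv:2407.09655 — 5 statements merged into one kernel-verified Lean document; each statement's English description precedes it below -/
import Mathlib

section
/- Fix k ∈ [N]. If π is uniformly distributed on S_N and ξ is uniformly distributed on the subgroup S_k = {σ ∈ S_N : σ(j) = j for all j > k}, independently of π, then the permutation π_{>k} ∘ ξ is uniformly distributed on S_N. Equivalently, the pushforward of the uniform probability measure on S_N × S_k under the map (π, ξ) ↦ π_{>k} ∘ ξ is the uniform probability measure on S_N. -/
/-- Embedding of `Fin (k+1)` into `Fin N` (where `k : Fin N`). -/
def emb {N : ℕ} (k : Fin N) (t : Fin (k.val + 1)) : Fin N :=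
  ⟨t.val, lt_of_lt_of_le t.isLt k.isLt⟩

/-- `Phi t = (N t_N)(N−1 t_{N−1})⋯(2 t_2)(1 t_1)`, the strictly monotone factorization map. -/
def Phi {N : ℕ} (t : ∀ k : Fin N, Fin (k.val + 1)) : Equiv.Perm (Fin N) :=
  ((List.finRange N).reverse.map fun k => Equiv.swap k (emb k (t k))).prod

instance {N : ℕ} : Nonempty (∀ k : Fin N, Fin (k.val + 1)) := ⟨fun _ => 0⟩

/-- `tof π` is the tuple `(t_1(π),…,t_N(π))` of the strictly monotone factorization of `π`
(well defined since `Phi` is bijective). -/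
noncomputable def tof {N : ℕ} (π : Equiv.Perm (Fin N)) : ∀ k : Fin N, Fin (k.val + 1) :=
  Function.invFun Phi π

/-- `ptail π k` is `π_{>k} = (N t_N)⋯(k+1 t_{k+1})`, the product of the factors with index `> k`. -/
noncomputable def ptail {N : ℕ} (π : Equiv.Perm (Fin N)) (k : Fin N) : Equiv.Perm (Fin N) :=
  (((List.finRange N).reverse.filter fun j => decide (k < j)).map
    fun j => Equiv.swap j (emb j (tof π j))).prod

instance {N : ℕ} (k : Fin N) :
    Nonempty {ξ : Equiv.Perm (Fin N) // ∀ j, k < j → ξ j = j} :=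
  ⟨⟨1, fun _ _ => rfl⟩⟩

/-! ### Auxiliary machinery -/

section Aux

variable {N : ℕ}

/-- Product of swaps along a list of indices. -/
def prodSwaps (L : List (Fin N)) (t : ∀ k : Fin N, Fin (k.val + 1)) : Equiv.Perm (Fin N) :=
  (L.map fun j => Equiv.swap j (emb j (t j))).prod

lemma prodSwaps_cons (a : Fin N) (L : List (Fin N)) (t : ∀ k : Fin N, Fin (k.val + 1)) :
    prodSwaps (a :: L) t = Equiv.swap a (emb a (t a)) * prodSwaps L t := by
  simp [prodSwaps]

lemma prodSwaps_append (L₁ L₂ : List (Fin N)) (t : ∀ k : Fin N, Fin (k.val + 1)) :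
    prodSwaps (L₁ ++ L₂) t = prodSwaps L₁ t * prodSwaps L₂ t := by
  simp [prodSwaps]

lemma prodSwaps_congr {L : List (Fin N)} {t t' : ∀ k : Fin N, Fin (k.val + 1)}
    (h : ∀ j ∈ L, t j = t' j) : prodSwaps L t = prodSwaps L t' := by
  unfold prodSwaps
  exact congrArg List.prod (List.map_congr_left fun j hj => by rw [h j hj])

lemma prodSwaps_apply_of_lt {L : List (Fin N)} (t : ∀ k : Fin N, Fin (k.val + 1)) {x : Fin N}
    (h : ∀ j ∈ L, j < x) : prodSwaps L t x = x := by
  induction L with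
  | nil => rfl
  | cons a L ih =>
    rw [prodSwaps_cons, Equiv.Perm.mul_apply,
      ih (fun j hj => h j (List.mem_cons_of_mem a hj))]
    refine Equiv.swap_apply_of_ne_of_ne (ne_of_gt (h a List.mem_cons_self)) (ne_of_gt ?_)
    have h1 : (emb a (t a)).val ≤ a.val := Nat.lt_succ_iff.mp (t a).isLt
    exact lt_of_le_of_lt h1 (h a List.mem_cons_self)

lemma prodSwaps_cons_apply_self {a : Fin N} {L : List (Fin N)}
    (t : ∀ k : Fin N, Fin (k.val + 1)) (h : ∀ j ∈ L, j < a) :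
    prodSwaps (a :: L) t a = emb a (t a) := by
  rw [prodSwaps_cons, Equiv.Perm.mul_apply, prodSwaps_apply_of_lt t h, Equiv.swap_apply_left]

lemma prodSwaps_injOn : ∀ (L : List (Fin N)), List.Pairwise (fun a b => b < a) L →
    ∀ {t t' : ∀ k : Fin N, Fin (k.val + 1)},
    prodSwaps L t = prodSwaps L t' → ∀ j ∈ L, t j = t' j := by
  intro L
  induction L with
  | nil => intro _ t t' _ j hj; cases hj
  | cons a L ih =>
    intro hL t t' h j hj
    obtain ⟨ha, hL'⟩ := List.pairwise_cons.mp hL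
    have hta : t a = t' a := by
      have h2 : prodSwaps (a :: L) t a = prodSwaps (a :: L) t' a := by rw [h]
      rw [prodSwaps_cons_apply_self t ha, prodSwaps_cons_apply_self t' ha] at h2
      have h3 : (emb a (t a)).val = (emb a (t' a)).val := congrArg Fin.val h2
      exact Fin.ext h3
    have h' : prodSwaps L t = prodSwaps L t' := by
      rw [prodSwaps_cons, prodSwaps_cons, hta] at h
      exact mul_left_cancel h
    rcases List.mem_cons.mp hj with rfl | hj'
    · exact hta
    · exact ih hL' h' j hj'

lemma pairwise_rev : List.Pairwise (fun a b : Fin N => b < a) (List.finRange N).reverse := by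
  rw [List.pairwise_reverse]
  exact List.pairwise_lt_finRange N

lemma Phi_eq (t : ∀ k : Fin N, Fin (k.val + 1)) : Phi t = prodSwaps (List.finRange N).reverse t :=
  rfl

lemma Phi_injective : Function.Injective (Phi (N := N)) := by
  intro t t' h
  funext j
  exact prodSwaps_injOn _ pairwise_rev h j (by simp)

lemma Phi_bijective : Function.Bijective (Phi (N := N)) := by
  refine (Fintype.bijective_iff_injective_and_card Phi).mpr ⟨Phi_injective, ?_⟩
  rw [Fintype.card_pi, Fintype.card_perm, Fintype.card_fin]
  simp only [Fintype.card_fin]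
  rw [Fin.prod_univ_eq_prod_range (fun i => i + 1) N]
  exact Finset.prod_range_add_one_eq_factorial N

lemma Phi_tof (π : Equiv.Perm (Fin N)) : Phi (tof π) = π :=
  Function.rightInverse_invFun Phi_bijective.surjective π

lemma tof_Phi (t : ∀ k : Fin N, Fin (k.val + 1)) : tof (Phi t) = t :=
  Function.leftInverse_invFun Phi_bijective.injective t

variable (k : Fin N)

lemma filter_split : ∀ {L : List (Fin N)}, List.Pairwise (fun a b => b < a) L →
    (L.filter fun j => decide (k < j)) ++ (L.filter fun j => !decide (k < j)) = L := by
  intro L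
  induction L with
  | nil => intro _; rfl
  | cons a L ih =>
    intro hL
    obtain ⟨ha, hL'⟩ := List.pairwise_cons.mp hL
    by_cases hk : k < a
    · rw [List.filter_cons_of_pos (by simpa using hk), List.filter_cons_of_neg (by simpa using hk),
        List.cons_append, ih hL']
    · have hall : ∀ b ∈ (a :: L), ¬ (k < b) := by
        intro b hb
        rcases List.mem_cons.mp hb with rfl | hb'
        · exact hk
        · exact fun hkb => hk (hkb.trans (ha b hb'))
      rw [List.filter_eq_nil_iff.mpr (fun b hb => by simpa using hall b hb),
        List.filter_eq_self.mpr (fun b hb => by simpa using hall b hb), List.nil_append]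

lemma Phi_split (t : ∀ k : Fin N, Fin (k.val + 1)) : Phi t =
    prodSwaps ((List.finRange N).reverse.filter fun j => decide (k < j)) t *
      prodSwaps ((List.finRange N).reverse.filter fun j => !decide (k < j)) t := by
  conv_lhs => rw [Phi_eq, ← filter_split k pairwise_rev]
  rw [prodSwaps_append]

lemma ptail_eq (π : Equiv.Perm (Fin N)) :
    ptail π k = prodSwaps ((List.finRange N).reverse.filter fun j => decide (k < j)) (tof π) :=
  rfl

lemma low_apply (t : ∀ k : Fin N, Fin (k.val + 1)) {x : Fin N} (hx : k < x) :
    prodSwaps ((List.finRange N).reverse.filter fun j => !decide (k < j)) t x = x := by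
  apply prodSwaps_apply_of_lt
  intro j hj
  have h2 : ¬ (k < j) := by simpa using (List.mem_filter.mp hj).2
  exact lt_of_le_of_lt (not_lt.mp h2) hx

lemma head_eq (π : Equiv.Perm (Fin N)) : (ptail π k)⁻¹ * π =
    prodSwaps ((List.finRange N).reverse.filter fun j => !decide (k < j)) (tof π) := by
  rw [ptail_eq, inv_mul_eq_iff_eq_mul, ← Phi_split, Phi_tof]

lemma head_mem (π : Equiv.Perm (Fin N)) : ∀ x, k < x → ((ptail π k)⁻¹ * π) x = x := by
  intro x hx
  rw [head_eq]
  exact low_apply k _ hx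

lemma top_refl : ∀ (L : List (Fin N)), List.Pairwise (fun a b => b < a) L →
    ∀ (t : ∀ k : Fin N, Fin (k.val + 1)), (∀ x, k < x → prodSwaps L t x = x) →
    ∀ j ∈ L, k < j → emb j (t j) = j := by
  intro L
  induction L with
  | nil => intro _ t _ j hj; cases hj
  | cons a L ih =>
    intro hL t hfix j hj hkj
    obtain ⟨ha, hL'⟩ := List.pairwise_cons.mp hL
    rcases List.mem_cons.mp hj with rfl | hj'
    · have := hfix j hkj
      rwa [prodSwaps_cons_apply_self t ha] at this
    · have hka : k < a := hkj.trans (ha j hj')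
      have hea : emb a (t a) = a := by
        have := hfix a hka
        rwa [prodSwaps_cons_apply_self t ha] at this
      refine ih hL' t ?_ j hj' hkj
      intro x hx
      have := hfix x hx
      rw [prodSwaps_cons, Equiv.Perm.mul_apply, hea, Equiv.swap_self] at this
      simpa using this

lemma top_one (h : Equiv.Perm (Fin N)) (hh : ∀ j, k < j → h j = j) :
    prodSwaps ((List.finRange N).reverse.filter fun j => decide (k < j)) (tof h) = 1 := by
  have hrefl : ∀ j, k < j → emb j (tof h j) = j := by
    intro j hkj
    refine top_refl k _ pairwise_rev (tof h) ?_ j (by simp) hkj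
    intro x hx
    rw [← Phi_eq, Phi_tof]
    exact hh x hx
  unfold prodSwaps
  apply List.prod_eq_one
  intro π hπ
  simp only [List.mem_map] at hπ
  obtain ⟨j, hj, rfl⟩ := hπ
  have hkj : k < j := by simpa using (List.mem_filter.mp hj).2
  rw [hrefl j hkj, Equiv.swap_self]
  rfl

/-- The key lemma: multiplying `ptail σ k` on the right by an element of `S_k` does not
change the `ptail`. -/
lemma ptail_ptail_mul (σ h : Equiv.Perm (Fin N)) (hh : ∀ j, k < j → h j = j) :
    ptail (ptail σ k * h) k = ptail σ k := by
  classical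
  set u : ∀ j : Fin N, Fin (j.val + 1) := fun j => if k < j then tof σ j else tof h j with hu
  have htop : ∀ j ∈ ((List.finRange N).reverse.filter fun j => decide (k < j)),
      tof σ j = u j := by
    intro j hj
    have : k < j := by simpa using (List.mem_filter.mp hj).2
    simp [hu, this]
  have hlow : ∀ j ∈ ((List.finRange N).reverse.filter fun j => !decide (k < j)),
      tof h j = u j := by
    intro j hj
    have : ¬ (k < j) := by simpa using (List.mem_filter.mp hj).2
    simp [hu, this]
  have h1 : ptail σ k * h = Phi u := by
    have hhsplit : h = prodSwaps ((List.finRange N).reverse.filter fun j => !decide (k < j))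
        (tof h) := by
      conv_lhs => rw [← Phi_tof h]
      rw [Phi_split k, top_one k h hh, one_mul]
    rw [ptail_eq, hhsplit, prodSwaps_congr htop, prodSwaps_congr hlow, ← prodSwaps_append,
      filter_split k pairwise_rev, ← Phi_eq]
  have h2 : tof (ptail σ k * h) = u := by rw [h1, tof_Phi]
  rw [ptail_eq, h2, ptail_eq]
  exact (prodSwaps_congr htop).symm

/-- The shuffling involution on `S_N × S_k`. -/
noncomputable def eqv :
    (Equiv.Perm (Fin N) × {ξ : Equiv.Perm (Fin N) // ∀ j, k < j → ξ j = j}) ≃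
      (Equiv.Perm (Fin N) × {ξ : Equiv.Perm (Fin N) // ∀ j, k < j → ξ j = j}) where
  toFun p := (ptail p.1 k * (p.2 : Equiv.Perm (Fin N)), ⟨(ptail p.1 k)⁻¹ * p.1, fun x hx => head_mem k p.1 x hx⟩)
  invFun p := (ptail p.1 k * (p.2 : Equiv.Perm (Fin N)), ⟨(ptail p.1 k)⁻¹ * p.1, fun x hx => head_mem k p.1 x hx⟩)
  left_inv p := by
    obtain ⟨π, ξ⟩ := p
    have hp : ptail (ptail π k * (ξ : Equiv.Perm (Fin N))) k = ptail π k := ptail_ptail_mul k π ξ ξ.2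
    refine Prod.ext ?_ (Subtype.ext ?_) <;> simp [hp]
  right_inv p := by
    obtain ⟨π, ξ⟩ := p
    have hp : ptail (ptail π k * (ξ : Equiv.Perm (Fin N))) k = ptail π k := ptail_ptail_mul k π ξ ξ.2
    refine Prod.ext ?_ (Subtype.ext ?_) <;> simp [hp]

lemma map_equiv_uniform {α : Type*} [Fintype α] [Nonempty α] (e : α ≃ α) :
    PMF.map e (PMF.uniformOfFintype α) = PMF.uniformOfFintype α := by
  ext b
  rw [PMF.map_apply, tsum_eq_single (e.symm b)
    (fun a ha => if_neg (fun hba => ha (by rw [hba, Equiv.symm_apply_apply])))]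
  simp

lemma map_fst_uniform {α β : Type*} [Fintype α] [Fintype β] [Nonempty α] [Nonempty β] :
    PMF.map Prod.fst (PMF.uniformOfFintype (α × β)) = PMF.uniformOfFintype α := by
  classical
  ext a
  rw [PMF.map_apply, tsum_fintype]
  simp only [PMF.uniformOfFintype_apply]
  rw [Fintype.sum_prod_type]
  have hcongr : ∀ x : α, (∑ _y : β, if a = x then ((Fintype.card (α × β) : ENNReal))⁻¹ else 0)
      = if a = x then (Fintype.card β : ENNReal) * ((Fintype.card (α × β) : ENNReal))⁻¹ else 0 := by
    intro x
    by_cases h : a = x <;> simp [h, Finset.sum_const, mul_comm]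
  rw [Finset.sum_congr rfl (fun x _ => hcongr x), Finset.sum_ite_eq, if_pos (Finset.mem_univ a),
    Fintype.card_prod, Nat.cast_mul]
  have hb0 : (Fintype.card β : ENNReal) ≠ 0 := by
    simp [Fintype.card_ne_zero]
  have hbt : (Fintype.card β : ENNReal) ≠ ⊤ := ENNReal.natCast_ne_top _
  rw [ENNReal.mul_inv (Or.inr hbt) (Or.inr hb0), mul_comm ((Fintype.card α : ENNReal))⁻¹,
    ← mul_assoc, ENNReal.mul_inv_cancel hb0 hbt, one_mul]

end Aux

/-- Fix `k ∈ [N]`.  If `π` is uniform on `S_N` and `ξ` is uniform on the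
subgroup `S_k = {σ : σ(j) = j for all j > k}`, independently of `π`, then `π_{>k} ∘ ξ` is
uniform on `S_N`: the pushforward of the uniform measure on `S_N × S_k` under
`(π, ξ) ↦ π_{>k} ∘ ξ` is the uniform measure on `S_N`. -/
theorem stmt2 {N : ℕ} (hN : 1 ≤ N) (k : Fin N) :
    PMF.map
        (fun p : Equiv.Perm (Fin N) × {ξ : Equiv.Perm (Fin N) // ∀ j, k < j → ξ j = j} =>
          ptail p.1 k * (p.2 : Equiv.Perm (Fin N)))
        (PMF.uniformOfFintype _)
      = PMF.uniformOfFintype (Equiv.Perm (Fin N)) := by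
  have hF : (fun p : Equiv.Perm (Fin N) × {ξ : Equiv.Perm (Fin N) // ∀ j, k < j → ξ j = j} =>
      ptail p.1 k * (p.2 : Equiv.Perm (Fin N))) = Prod.fst ∘ (eqv k) := rfl
  rw [hF, ← PMF.map_comp, map_equiv_uniform, map_fst_uniform]
end

section
/- Fix k ∈ [N] and ℓ ∈ {k+1,…,N}. For a uniformly random π ∈ S_N, the probability that π_{>k}(k) = ℓ equals 1/N; equivalently, the number of permutations π ∈ S_N with π_{>k}(k) = ℓ equals (N−1)!. -/
namespace Stmt4Aux

variable {N : ℕ}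

abbrev Tup (N : ℕ) := ∀ k : Fin N, Fin (k.val + 1)

/-- partial products of the factorization over a list of indices -/
def F (t : ∀ k : Fin N, Fin (k.val + 1)) (L : List (Fin N)) : Equiv.Perm (Fin N) :=
  (L.map fun j => Equiv.swap j (emb j (t j))).prod

@[simp] lemma F_nil (t : ∀ k : Fin N, Fin (k.val + 1)) : F t [] = 1 := rfl

lemma F_cons (t : ∀ k : Fin N, Fin (k.val + 1)) (j : Fin N) (L : List (Fin N)) :
    F t (j :: L) = Equiv.swap j (emb j (t j)) * F t L := by
  simp [F]

@[simp] lemma emb_val (j : Fin N) (a : Fin (j.val + 1)) : (emb j a).val = a.val := rfl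

lemma emb_le (j : Fin N) (a : Fin (j.val + 1)) : (emb j a).val ≤ j.val :=
  Nat.lt_succ_iff.mp a.isLt

lemma F_fix (t : ∀ k : Fin N, Fin (k.val + 1)) (L : List (Fin N)) (m : Fin N)
    (h : ∀ j ∈ L, j < m) : F t L m = m := by
  induction L with
  | nil => rfl
  | cons j rest ih =>
    have hj : j < m := h j (by simp)
    rw [F_cons, Equiv.Perm.mul_apply, ih (fun i hi => h i (by simp [hi]))]
    refine Equiv.swap_apply_of_ne_of_ne (fun hc => ?_) (fun hc => ?_)
    · exact absurd (hc ▸ hj) (lt_irrefl m)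
    · have : (emb j (t j)).val ≤ j.val := emb_le j (t j)
      have : m.val ≤ j.val := by rw [hc]; exact this
      exact absurd (lt_of_le_of_lt this hj) (lt_irrefl _)

lemma F_congr (t s : ∀ k : Fin N, Fin (k.val + 1)) (L : List (Fin N))
    (h : ∀ j ∈ L, t j = s j) : F t L = F s L := by
  induction L with
  | nil => rfl
  | cons j rest ih =>
    rw [F_cons, F_cons, h j (by simp), ih (fun i hi => h i (by simp [hi]))]

lemma F_inj (t s : ∀ k : Fin N, Fin (k.val + 1)) (L : List (Fin N))
    (hL : List.Pairwise (· > ·) L) (h : F t L = F s L) : ∀ j ∈ L, t j = s j := by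
  induction L with
  | nil => simp
  | cons j rest ih =>
    have hrest : ∀ i ∈ rest, i < j := fun i hi => (List.pairwise_cons.mp hL).1 i hi
    have hfix : F t rest j = j := F_fix t rest j hrest
    have hfix' : F s rest j = j := F_fix s rest j hrest
    have hval : emb j (t j) = emb j (s j) := by
      have h1 : F t (j :: rest) j = emb j (t j) := by
        rw [F_cons, Equiv.Perm.mul_apply, hfix, Equiv.swap_apply_left]
      have h2 : F s (j :: rest) j = emb j (s j) := by
        rw [F_cons, Equiv.Perm.mul_apply, hfix', Equiv.swap_apply_left]
      rw [← h1, ← h2, h]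
    have htj : t j = s j := by
      have := congrArg Fin.val hval
      exact Fin.ext (by simpa [emb] using this)
    intro i hi
    rcases List.mem_cons.mp hi with rfl | hi'
    · exact htj
    · refine ih (List.pairwise_cons.mp hL).2 ?_ i hi'
      have h2 := h
      rw [F_cons, F_cons, htj] at h2
      exact mul_left_cancel h2

lemma Phi_eq_F (t : ∀ k : Fin N, Fin (k.val + 1)) : Phi t = F t (List.finRange N).reverse := rfl

lemma sorted_rev_finRange : List.Pairwise (· > ·) ((List.finRange N).reverse) := by
  rw [List.pairwise_reverse]
  exact List.pairwise_lt_finRange N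

lemma Phi_injective : Function.Injective (Phi (N := N)) := by
  intro t s h
  funext j
  exact F_inj t s _ sorted_rev_finRange h j (by simp)

lemma card_tuples : Fintype.card (∀ k : Fin N, Fin (k.val + 1)) = N.factorial := by
  rw [Fintype.card_pi]
  simp only [Fintype.card_fin]
  rw [Fin.prod_univ_eq_prod_range (fun i => i + 1) N]
  exact Finset.prod_range_add_one_eq_factorial N

lemma Phi_bijective : Function.Bijective (Phi (N := N)) := by
  rw [Fintype.bijective_iff_injective_and_card]
  refine ⟨Phi_injective, ?_⟩
  rw [card_tuples, Fintype.card_perm, Fintype.card_fin]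

lemma tof_Phi (t : ∀ k : Fin N, Fin (k.val + 1)) : tof (Phi t) = t :=
  Function.leftInverse_invFun Phi_injective t

lemma Phi_tof (π : Equiv.Perm (Fin N)) : Phi (tof π) = π :=
  Function.rightInverse_invFun Phi_bijective.surjective π

lemma count_eq (j : Fin N) (P : Tup N → Prop) [DecidablePred P]
    (f : Tup N → Fin (j.val + 1))
    (hP : ∀ t a, P (Function.update t j a) ↔ P t)
    (hf : ∀ t a, f (Function.update t j a) = f t) :
    (Finset.univ.filter fun t => P t ∧ t j = f t).card * (j.val + 1)
      = (Finset.univ.filter P).card := by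
  classical
  have hcard : ((Finset.univ.filter fun t : Tup N => P t ∧ t j = f t) ×ˢ
      (Finset.univ : Finset (Fin (j.val + 1)))).card
      = (Finset.univ.filter fun t => P t ∧ t j = f t).card * (j.val + 1) := by
    rw [Finset.card_product, Finset.card_univ, Fintype.card_fin]
  rw [← hcard]
  refine Finset.card_bij' (fun p _ => Function.update p.1 j p.2)
    (fun u _ => (Function.update u j (f u), u j)) ?_ ?_ ?_ ?_
  · rintro ⟨t, a⟩ hmem
    simp only [Finset.mem_product, Finset.mem_filter, Finset.mem_univ, true_and] at hmem ⊢
    exact (hP t a).mpr hmem.1.1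
  · intro u hu
    simp only [Finset.mem_filter, Finset.mem_univ, true_and] at hu
    simp only [Finset.mem_product, Finset.mem_filter, Finset.mem_univ, true_and,
      Finset.mem_univ, and_true]
    refine ⟨(hP u (f u)).mpr hu, ?_⟩
    rw [hf u (f u), Function.update_self]
  · rintro ⟨t, a⟩ hmem
    simp only [Finset.mem_product, Finset.mem_filter, Finset.mem_univ, true_and] at hmem
    obtain ⟨⟨hPt, htj⟩, -⟩ := hmem
    ext1
    · simp only
      rw [hf t a, Function.update_idem, ← htj, Function.update_eq_self]
    · simp only
      rw [Function.update_self]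
  · intro u hu
    simp only
    rw [Function.update_idem, Function.update_eq_self]


lemma traj_mem (k : Fin N) (t : Tup N) :
    ∀ L : List (Fin N), List.Pairwise (· > ·) (L ++ [k]) → F t L k = k ∨ F t L k ∈ L := by
  intro L
  induction L with
  | nil => intro _; left; rfl
  | cons j rest ih =>
    intro hs
    have hsrest : List.Pairwise (· > ·) (rest ++ [k]) := (List.pairwise_cons.mp hs).2
    have hjgt : ∀ b ∈ rest ++ [k], b < j := (List.pairwise_cons.mp hs).1
    have hplt : F t rest k < j := by
      rcases ih hsrest with h | h
      · rw [h]; exact hjgt k (by simp)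
      · exact hjgt _ (by simp [h])
    have hpj : F t rest k ≠ j := ne_of_lt hplt
    rw [F_cons, Equiv.Perm.mul_apply]
    by_cases hpa : F t rest k = emb j (t j)
    · rw [hpa, Equiv.swap_apply_right]; right; simp
    · rw [Equiv.swap_apply_of_ne_of_ne hpj hpa]
      rcases ih hsrest with h | h
      · left; exact h
      · right; simp [h]

lemma main_count (k : Fin N) :
    ∀ L : List (Fin N), List.Pairwise (· > ·) (L ++ [k]) → ∀ v ∈ L,
    (Finset.univ.filter fun t : Tup N => F t L k = v).card
        * ((v.val + 1) * ((L.filter fun jj => decide (v < jj)).map fun jj => jj.val + 1).prod)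
      = Fintype.card (Tup N)
        * ((L.filter fun jj => decide (v < jj)).map fun jj => jj.val).prod := by
  intro L
  induction L with
  | nil => exact fun _ v hv => absurd hv List.not_mem_nil
  | cons j rest ih =>
    intro hs v hv
    classical
    have hsrest : List.Pairwise (· > ·) (rest ++ [k]) := (List.pairwise_cons.mp hs).2
    have hjgt : ∀ b ∈ rest ++ [k], b < j := (List.pairwise_cons.mp hs).1
    have hjk : k < j := hjgt k (by simp)
    have hjrest : ∀ b ∈ rest, b < j := fun b hb => hjgt b (by simp [hb])
    have hjnotrest : j ∉ rest := fun h => lt_irrefl j (hjrest j h)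
    have hplt : ∀ t : Tup N, F t rest k < j := by
      intro t
      rcases traj_mem k t rest hsrest with h | h
      · rw [h]; exact hjk
      · exact hjrest _ h
    have hpj : ∀ t : Tup N, F t rest k ≠ j := fun t => ne_of_lt (hplt t)
    have hFupd : ∀ (t : Tup N) a, F (Function.update t j a) rest = F t rest := fun t a =>
      F_congr _ _ _ (fun i hi => Function.update_of_ne (by rintro rfl; exact hjnotrest hi) _ _)
    by_cases hvj : v = j
    · subst hvj
      set f : Tup N → Fin (v.val + 1) :=
        fun t => ⟨(F t rest k).val, Nat.lt_succ_of_lt (hplt t)⟩ with hf_def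
      have hcond : ∀ t : Tup N, (F t (v :: rest) k = v) ↔ (True ∧ t v = f t) := by
        intro t
        rw [F_cons, Equiv.Perm.mul_apply, true_and]
        constructor
        · intro h
          by_contra hne
          have hpa : F t rest k ≠ emb v (t v) := by
            intro hc
            exact hne (Fin.ext (by simpa using congrArg Fin.val hc.symm))
          rw [Equiv.swap_apply_of_ne_of_ne (hpj t) hpa] at h
          exact hpj t h
        · intro h
          have : emb v (t v) = F t rest k := Fin.ext (by simpa using congrArg Fin.val h)
          rw [← this, Equiv.swap_apply_right]
      have hfilt : (Finset.univ.filter fun t : Tup N => F t (v :: rest) k = v)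
          = Finset.univ.filter fun t : Tup N => True ∧ t v = f t :=
        Finset.filter_congr fun t _ => hcond t
      have hflist : (v :: rest).filter (fun jj => decide (v < jj)) = [] := by
        rw [List.filter_eq_nil_iff]
        intro a ha
        rcases List.mem_cons.mp ha with rfl | ha'
        · simp
        · simp only [decide_eq_true_eq]
          exact fun hc => absurd (lt_trans hc (hjrest a ha')) (lt_irrefl v)
      rw [hfilt, hflist]
      simp only [List.map_nil, List.prod_nil, mul_one]
      rw [count_eq v (fun _ => True) f (by simp) (fun t a => Fin.ext (by simp [hf_def, hFupd]))]
      simp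
    · have hv' : v ∈ rest := (List.mem_cons.mp hv).resolve_left hvj
      have hvlt : v < j := hjrest v hv'
      set c : Fin (j.val + 1) := ⟨v.val, Nat.lt_succ_of_lt hvlt⟩ with hc_def
      have hcond : ∀ t : Tup N,
          (F t (j :: rest) k = v) ↔ ((F t rest k = v) ∧ ¬(t j = c)) := by
        intro t
        rw [F_cons, Equiv.Perm.mul_apply]
        constructor
        · intro h
          have hpa : F t rest k ≠ emb j (t j) := by
            intro hc
            rw [hc, Equiv.swap_apply_right] at h
            exact hvj h.symm
          rw [Equiv.swap_apply_of_ne_of_ne (hpj t) hpa] at h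
          refine ⟨h, fun htj => ?_⟩
          apply hpa
          rw [h]
          exact Fin.ext (by simp [htj, hc_def])
        · rintro ⟨hp, hne⟩
          have hpa : F t rest k ≠ emb j (t j) := by
            intro hcc
            exact hne (Fin.ext (by simpa [hc_def, ← hp] using congrArg Fin.val hcc.symm))
          rw [Equiv.swap_apply_of_ne_of_ne (hpj t) hpa]
          exact hp
      have hfilt : (Finset.univ.filter fun t : Tup N => F t (j :: rest) k = v)
          = Finset.univ.filter fun t : Tup N => (F t rest k = v) ∧ ¬(t j = c) :=
        Finset.filter_congr fun t _ => hcond t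
      set A := (Finset.univ.filter fun t : Tup N => F t rest k = v).card with hA
      set B := (Finset.univ.filter fun t : Tup N => (F t rest k = v) ∧ t j = c).card with hB
      have hBA : B * (j.val + 1) = A :=
        count_eq j (fun t => F t rest k = v) (fun _ => c)
          (fun t a => by simp only [hFupd]) (fun t a => rfl)
      have hsplit : B + (Finset.univ.filter
          fun t : Tup N => (F t rest k = v) ∧ ¬(t j = c)).card = A := by
        rw [hA, hB]
        have h := Finset.card_filter_add_card_filter_not
          (s := Finset.univ.filter fun t : Tup N => F t rest k = v)
          (p := fun t : Tup N => t j = c)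
        rw [Finset.filter_filter, Finset.filter_filter] at h
        exact h
      have key : (Finset.univ.filter
          fun t : Tup N => (F t rest k = v) ∧ ¬(t j = c)).card * (j.val + 1) = A * j.val := by
        have h1 : (Finset.univ.filter
            fun t : Tup N => (F t rest k = v) ∧ ¬(t j = c)).card = A - B := by
          rw [← hsplit, Nat.add_sub_cancel_left]
        rw [h1, Nat.sub_mul, hBA, Nat.mul_succ, Nat.add_sub_cancel]
      set cnt := (Finset.univ.filter
          fun t : Tup N => (F t rest k = v) ∧ ¬(t j = c)).card with hcnt
      have hflist : (j :: rest).filter (fun jj => decide (v < jj))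
          = j :: rest.filter (fun jj => decide (v < jj)) := by
        rw [List.filter_cons]
        simp [hvlt]
      have IH := ih hsrest v hv'
      rw [hfilt, hflist]
      simp only [List.map_cons, List.prod_cons]
      set Qp := ((rest.filter fun jj => decide (v < jj)).map fun jj => jj.val + 1).prod
      set Q := ((rest.filter fun jj => decide (v < jj)).map fun jj => jj.val).prod
      calc cnt * ((v.val + 1) * ((j.val + 1) * Qp))
          = (cnt * (j.val + 1)) * ((v.val + 1) * Qp) := by ring
        _ = (A * j.val) * ((v.val + 1) * Qp) := by rw [key]
        _ = j.val * (A * ((v.val + 1) * Qp)) := by ring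
        _ = j.val * (Fintype.card (Tup N) * Q) := by rw [IH]
        _ = Fintype.card (Tup N) * (j.val * Q) := by ring


lemma teles : ∀ n a : ℕ, a < n →
    (a + 1) * (∏ m ∈ Finset.Ico (a + 1) n, (m + 1)) = n * ∏ m ∈ Finset.Ico (a + 1) n, m := by
  intro n
  induction n with
  | zero => intro a h; exact absurd h (Nat.not_lt_zero a)
  | succ n ihn =>
    intro a h
    rcases Nat.lt_or_ge a n with ha | ha
    · rw [Finset.prod_Ico_succ_top (Nat.succ_le_of_lt ha),
        Finset.prod_Ico_succ_top (Nat.succ_le_of_lt ha)]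
      calc (a + 1) * ((∏ m ∈ Finset.Ico (a + 1) n, (m + 1)) * (n + 1))
          = ((a + 1) * ∏ m ∈ Finset.Ico (a + 1) n, (m + 1)) * (n + 1) := by ring
        _ = (n * ∏ m ∈ Finset.Ico (a + 1) n, m) * (n + 1) := by rw [ihn a ha]
        _ = (n + 1) * ((∏ m ∈ Finset.Ico (a + 1) n, m) * n) := by ring
    · have hae : a = n := le_antisymm (Nat.lt_succ_iff.mp h) ha
      subst hae
      rw [Finset.Ico_self]
      simp

end Stmt4Aux

/-- Fix `k ∈ [N]` and `ℓ ∈ {k+1,…,N}`.  For uniformly random `π ∈ S_N`,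
`Pr(π_{>k}(k) = ℓ) = 1/N`; equivalently, the number of permutations `π ∈ S_N` with
`π_{>k}(k) = ℓ` equals `(N−1)!`. -/
theorem stmt4 {N : ℕ} (hN : 1 ≤ N) (k ℓ : Fin N) (hkl : k < ℓ) :
    (Finset.univ.filter fun π : Equiv.Perm (Fin N) => ptail π k k = ℓ).card
      = (N - 1).factorial := by
  classical
  have hN0 : 0 < N := hN
  set S := (List.finRange N).reverse.filter fun j => decide (k < j) with hS
  have hsortS : List.Pairwise (· > ·) S :=
    List.Pairwise.sublist List.filter_sublist Stmt4Aux.sorted_rev_finRange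
  have hSapp : List.Pairwise (· > ·) (S ++ [k]) := by
    rw [List.pairwise_append]
    refine ⟨hsortS, List.pairwise_singleton _ _, ?_⟩
    intro a ha b hb
    rcases List.mem_singleton.mp hb with rfl
    have h2 := (List.mem_filter.mp ha).2
    simpa using h2
  have hmemS : ℓ ∈ S := List.mem_filter.mpr ⟨by simp, by simpa using hkl⟩
  have htrans : (Finset.univ.filter fun π : Equiv.Perm (Fin N) => ptail π k k = ℓ).card
      = (Finset.univ.filter fun t : Stmt4Aux.Tup N => Stmt4Aux.F t S k = ℓ).card := by
    refine Finset.card_bij' (fun π _ => tof π) (fun t _ => Phi t) ?_ ?_ ?_ ?_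
    · intro π hπ
      simp only [Finset.mem_filter, Finset.mem_univ, true_and] at hπ ⊢
      exact hπ
    · intro t ht
      simp only [Finset.mem_filter, Finset.mem_univ, true_and] at ht ⊢
      show Stmt4Aux.F (tof (Phi t)) S k = ℓ
      rw [Stmt4Aux.tof_Phi]
      exact ht
    · intro π _
      exact Stmt4Aux.Phi_tof π
    · intro t _
      exact Stmt4Aux.tof_Phi t
  have main := Stmt4Aux.main_count k S hSapp ℓ hmemS
  have hLf : S.filter (fun jj => decide (ℓ < jj))
      = (List.finRange N).reverse.filter fun jj => decide (ℓ < jj) := by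
    rw [hS, List.filter_filter]
    refine List.filter_congr ?_
    intro a _
    by_cases h : ℓ < a
    · simp [h, lt_trans hkl h]
    · simp [h]
  set Lf := (List.finRange N).reverse.filter (fun jj => decide (ℓ < jj)) with hLfdef
  have hnodup : Lf.Nodup :=
    List.Nodup.filter _ (List.nodup_reverse.mpr (List.nodup_finRange N))
  have htofin : Lf.toFinset = Finset.univ.filter (fun x : Fin N => ℓ < x) := by
    ext x
    simp [hLfdef, List.mem_filter]
  have hprod1 : (Lf.map fun jj => jj.val + 1).prod
      = ∏ x ∈ Finset.univ.filter (fun x : Fin N => ℓ < x), (x.val + 1) := by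
    rw [← htofin]
    exact (List.prod_toFinset _ hnodup).symm
  have hprod0 : (Lf.map fun jj => jj.val).prod
      = ∏ x ∈ Finset.univ.filter (fun x : Fin N => ℓ < x), x.val := by
    rw [← htofin]
    exact (List.prod_toFinset _ hnodup).symm
  have hIco : ∀ g : ℕ → ℕ, ∏ x ∈ Finset.univ.filter (fun x : Fin N => ℓ < x), g x.val
      = ∏ m ∈ Finset.Ico (ℓ.val + 1) N, g m := by
    intro g
    refine Finset.prod_bij' (fun x _ => x.val) (fun m hm => ⟨m, (Finset.mem_Ico.mp hm).2⟩)
      ?_ ?_ ?_ ?_ ?_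
    · intro x hx
      simp only [Finset.mem_filter, Finset.mem_univ, true_and] at hx
      exact Finset.mem_Ico.mpr ⟨Fin.lt_def.mp hx, x.isLt⟩
    · intro m hm
      simp only [Finset.mem_filter, Finset.mem_univ, true_and]
      exact Fin.lt_def.mpr (by simpa using (Finset.mem_Ico.mp hm).1)
    · intro x hx
      rfl
    · intro m hm
      rfl
    · intro x hx
      rfl
  rw [hLf, hprod1, hprod0, hIco (fun m => m + 1), hIco (fun m => m),
    Stmt4Aux.card_tuples] at main
  have htel := Stmt4Aux.teles N ℓ.val ℓ.isLt
  rw [htel] at main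
  have hYpos : 0 < ∏ m ∈ Finset.Ico (ℓ.val + 1) N, m :=
    Finset.prod_pos fun m hm =>
      Nat.lt_of_lt_of_le (Nat.succ_pos ℓ.val) (Finset.mem_Ico.mp hm).1
  rw [htrans]
  have h2 : (Finset.univ.filter fun t : Stmt4Aux.Tup N => Stmt4Aux.F t S k = ℓ).card * N
      = N.factorial := by
    refine Nat.eq_of_mul_eq_mul_right hYpos ?_
    rw [mul_assoc]
    exact main
  have h3 : N.factorial = (N - 1).factorial * N := by
    rw [mul_comm]
    exact (Nat.mul_factorial_pred hN0.ne').symm ▸ rfl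
  rw [h3] at h2
  exact Nat.eq_of_mul_eq_mul_right hN0 h2
end

section
/- For every x ∈ [N], the expected number of active locations for a uniformly random permutation satisfies (1/N!) ∑_{π ∈ S_N} |A(π,x)| ≤ 1 + ln N − ln x. -/
/-- `phead π k` is `π_{<k} = (k−1 t_{k−1})⋯(1 t_1)`. -/
noncomputable def phead {N : ℕ} (π : Equiv.Perm (Fin N)) (k : Fin N) : Equiv.Perm (Fin N) :=
  (((List.finRange N).reverse.filter fun j => decide (j < k)).map
    fun j => Equiv.swap j (emb j (tof π j))).prod

/-- `A(π,x)`: the set of active locations, i.e. `k` with `π_{<k}(x) ∈ {k, t_k(π)}`. -/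
noncomputable def activeSet {N : ℕ} (π : Equiv.Perm (Fin N)) (x : Fin N) : Finset (Fin N) :=
  Finset.univ.filter fun k => phead π k x = k ∨ phead π k x = emb k (tof π k)

section
variable {N : ℕ}

def tailP (t : ∀ k : Fin N, Fin (k.val + 1)) (k : Fin N) : Equiv.Perm (Fin N) :=
  (((List.finRange N).reverse.filter fun j => decide (j < k)).map
    fun j => Equiv.swap j (emb j (t j))).prod

def headP (t : ∀ k : Fin N, Fin (k.val + 1)) (k : Fin N) : Equiv.Perm (Fin N) :=
  (((List.finRange N).reverse.filter fun j => decide (k < j)).map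
    fun j => Equiv.swap j (emb j (t j))).prod

lemma split_pairwise {α} [LinearOrder α] [DecidableEq α] :
    ∀ (l : List α) (k : α), l.Pairwise (· > ·) → k ∈ l →
    l = l.filter (fun j => decide (k < j)) ++ k :: l.filter (fun j => decide (j < k)) := by
  intro l
  induction l with
  | nil => intro k _ h; simp at h
  | cons a l ih =>
    intro k hp hm
    rcases List.pairwise_cons.1 hp with ⟨ha, hp'⟩
    rcases List.mem_cons.1 hm with rfl | hm'
    · have h1 : l.filter (fun j => decide (k < j)) = [] := by
        apply List.filter_eq_nil_iff.2
        intro b hb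
        simp [not_lt.2 (le_of_lt (ha b hb))]
      have h2 : l.filter (fun j => decide (j < k)) = l := by
        apply List.filter_eq_self.2
        intro b hb; simp [ha b hb]
      simp [h1, h2]
    · have hak : k < a := ha k hm'
      have h1 : (a :: l).filter (fun j => decide (k < j))
          = a :: l.filter (fun j => decide (k < j)) := by simp [hak]
      have h2 : (a :: l).filter (fun j => decide (j < k))
          = l.filter (fun j => decide (j < k)) := by simp [not_lt.2 (le_of_lt hak)]
      rw [h1, h2, List.cons_append]
      exact congrArg (a :: ·) (ih k hp' hm')

lemma finRange_rev_pairwise (N : ℕ) : ((List.finRange N).reverse).Pairwise (· > ·) := by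
  rw [List.pairwise_reverse]
  exact List.pairwise_lt_finRange N

lemma finRange_rev_split (k : Fin N) :
    (List.finRange N).reverse =
      ((List.finRange N).reverse.filter (fun j => decide (k < j))) ++
        k :: ((List.finRange N).reverse.filter (fun j => decide (j < k))) :=
  split_pairwise _ k (finRange_rev_pairwise N) (by simp)

lemma Phi_split_s7 (t : ∀ k : Fin N, Fin (k.val + 1)) (k : Fin N) :
    Phi t = headP t k * Equiv.swap k (emb k (t k)) * tailP t k := by
  unfold Phi headP tailP
  conv_lhs => rw [finRange_rev_split k]
  rw [List.map_append, List.prod_append, List.map_cons, List.prod_cons, mul_assoc]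

/-- list prod of perms preserves bounded set -/
lemma prod_preserve (l : List (Equiv.Perm (Fin N))) (K : ℕ)
    (h : ∀ g ∈ l, ∀ c : Fin N, c.val < K → (g c).val < K) :
    ∀ c : Fin N, c.val < K → (l.prod c).val < K := by
  induction l with
  | nil => intro c hc; simpa using hc
  | cons a l ih =>
    intro c hc
    rw [List.prod_cons]
    exact h a (by simp) _ (ih (fun g hg => h g (by simp [hg])) c hc)

lemma tailP_lt (t : ∀ k : Fin N, Fin (k.val + 1)) (k : Fin N) (c : Fin N)
    (hc : c.val < k.val) : (tailP t k c).val < k.val := by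
  apply prod_preserve _ k.val _ c hc
  intro g hg c' hc'
  rcases List.mem_map.1 hg with ⟨j, hj, rfl⟩
  have hjk : j < k := by simpa using (List.mem_filter.1 hj).2
  by_cases h1 : c' = j
  · rw [h1, Equiv.swap_apply_left]; exact lt_of_le_of_lt (Nat.lt_succ_iff.1 (t j).isLt) hjk
  by_cases h2 : c' = emb j (t j)
  · rw [h2, Equiv.swap_apply_right]; exact hjk
  · rw [Equiv.swap_apply_of_ne_of_ne h1 h2]; exact hc'

lemma prod_fix (l : List (Equiv.Perm (Fin N))) (c : Fin N)
    (h : ∀ g ∈ l, g c = c) : l.prod c = c := by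
  induction l with
  | nil => simp
  | cons a l ih =>
    rw [List.prod_cons, Equiv.Perm.mul_apply, ih (fun g hg => h g (by simp [hg]))]
    exact h a (by simp)

lemma tailP_fix (t : ∀ k : Fin N, Fin (k.val + 1)) (k : Fin N) (c : Fin N)
    (hc : k.val ≤ c.val) : tailP t k c = c := by
  apply prod_fix
  intro g hg
  rcases List.mem_map.1 hg with ⟨j, hj, rfl⟩
  have hjk : j < k := by simpa using (List.mem_filter.1 hj).2
  apply Equiv.swap_apply_of_ne_of_ne
  · intro h; exact absurd hc (not_le.2 (show c < k by rw [h]; exact hjk))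
  · intro h
    apply absurd hc
    apply not_le.2
    calc c.val = (t j).val := by rw [h]; rfl
    _ < j.val + 1 := (t j).isLt
    _ ≤ k.val := hjk

lemma tailP_congr {t t' : ∀ k : Fin N, Fin (k.val + 1)} (k : Fin N)
    (h : ∀ j, j < k → t j = t' j) : tailP t k = tailP t' k := by
  unfold tailP
  congr 1
  apply List.map_congr_left
  intro j hj
  rw [h j (by simpa using (List.mem_filter.1 hj).2)]

lemma headP_congr {t t' : ∀ k : Fin N, Fin (k.val + 1)} (k : Fin N)
    (h : ∀ j, k < j → t j = t' j) : headP t k = headP t' k := by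
  unfold headP
  congr 1
  apply List.map_congr_left
  intro j hj
  rw [h j (by simpa using (List.mem_filter.1 hj).2)]

lemma Phi_eval (t : ∀ k : Fin N, Fin (k.val + 1)) (k : Fin N) :
    ((headP t k)⁻¹ * Phi t) k = emb k (t k) := by
  rw [Phi_split_s7 t k]
  have : (headP t k)⁻¹ * (headP t k * Equiv.swap k (emb k (t k)) * tailP t k)
      = Equiv.swap k (emb k (t k)) * tailP t k := by group
  rw [this]
  have hfix : tailP t k k = k := tailP_fix t k k le_rfl
  simp [Equiv.Perm.mul_apply, hfix]
end

section
variable {N : ℕ}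

lemma emb_injective (k : Fin N) : Function.Injective (emb k) := by
  intro a b h
  have : (emb k a).val = (emb k b).val := congrArg Fin.val h
  exact Fin.ext this

lemma card_pi_eq : Fintype.card (∀ k : Fin N, Fin (k.val + 1)) = N.factorial := by
  rw [Fintype.card_pi]
  simp only [Fintype.card_fin]
  rw [Fin.prod_univ_eq_prod_range (fun i => i + 1) N]
  exact Finset.prod_range_add_one_eq_factorial N

end

section
variable {N : ℕ}

lemma phead_Phi (t : ∀ k : Fin N, Fin (k.val + 1)) (k : Fin N) :
    phead (Phi t) k = tailP t k := by
  unfold phead tailP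
  rw [tof_Phi]

lemma activeSet_Phi (t : ∀ k : Fin N, Fin (k.val + 1)) (x : Fin N) :
    activeSet (Phi t) x =
      Finset.univ.filter fun k => tailP t k x = k ∨ tailP t k x = emb k (t k) := by
  unfold activeSet
  congr 1
  funext k
  rw [phead_Phi, tof_Phi]

variable (x : Fin N)

/-- the value `cK k / (k+1)` we aim for -/
noncomputable def cK (k : Fin N) : ℝ :=
  if k.val < x.val then 0 else if k = x then (k.val + 1 : ℝ) else 1

lemma per_k (k : Fin N) :
    (∑ t : ∀ j : Fin N, Fin (j.val + 1),
      if tailP t k x = k ∨ tailP t k x = emb k (t k) then (1:ℝ) else 0)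
    = (Fintype.card (∀ j : {j : Fin N // j ≠ k}, Fin ((j : Fin N).val + 1)) : ℝ) * cK x k := by
  classical
  set e := Equiv.piSplitAt k (fun j : Fin N => Fin (j.val + 1)) with he
  rw [← Fintype.sum_equiv e.symm
      (fun p => if tailP (e.symm p) k x = k ∨ tailP (e.symm p) k x = emb k ((e.symm p) k)
        then (1:ℝ) else 0)
      (fun t => if tailP t k x = k ∨ tailP t k x = emb k (t k) then (1:ℝ) else 0)
      (fun p => rfl)]
  rw [Fintype.sum_prod_type]
  rw [Finset.sum_comm]
  -- key facts about e.symm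
  have hval : ∀ (a : Fin (k.val+1)) r, (e.symm (a, r)) k = a := by
    intro a r
    simp [he, Equiv.piSplitAt_symm_apply]
  have hoff : ∀ (a : Fin (k.val+1)) r (j : Fin N) (hj : j ≠ k),
      (e.symm (a, r)) j = r ⟨j, hj⟩ := by
    intro a r j hj
    simp [he, Equiv.piSplitAt_symm_apply, hj]
  have htail : ∀ (a a' : Fin (k.val+1)) r, tailP (e.symm (a, r)) k = tailP (e.symm (a', r)) k := by
    intro a a' r
    apply tailP_congr
    intro j hj
    have hj' : j ≠ k := ne_of_lt hj
    rw [hoff a _ j hj', hoff a' _ j hj']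
  -- inner sum
  have hinner : ∀ r, (∑ a : Fin (k.val+1),
      if tailP (e.symm (a, r)) k x = k ∨ tailP (e.symm (a, r)) k x = emb k ((e.symm (a, r)) k)
        then (1:ℝ) else 0) = cK x k := by
    intro r
    set y := tailP (e.symm (⟨0, Nat.succ_pos _⟩, r)) k x with hy
    have hcond : ∀ a : Fin (k.val+1),
        (tailP (e.symm (a, r)) k x = k ∨ tailP (e.symm (a, r)) k x = emb k ((e.symm (a, r)) k))
        ↔ (y = k ∨ y = emb k a) := by
      intro a
      rw [htail a ⟨0, Nat.succ_pos _⟩ r, hval a r, ← hy]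
    rcases lt_trichotomy k x with hlt | heq | hgt
    · -- k < x : never active
      have hyx : y = x := tailP_fix _ _ _ (le_of_lt hlt)
      have : ∀ a : Fin (k.val+1), ¬(y = k ∨ y = emb k a) := by
        intro a h
        rcases h with h | h
        · rw [hyx] at h; exact absurd (congrArg Fin.val h) (Nat.ne_of_gt hlt)
        · rw [hyx] at h
          have : x.val = (emb k a).val := congrArg Fin.val h
          have hle : (emb k a).val < k.val + 1 := a.isLt
          omega
      rw [Finset.sum_congr rfl (fun a _ => by rw [if_neg (by rw [hcond a]; exact this a)])]
      simp [cK, hlt]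
    · -- k = x : always active
      have hyx : y = x := tailP_fix _ _ _ (le_of_eq (congrArg Fin.val heq))
      have : ∀ a : Fin (k.val+1), (y = k ∨ y = emb k a) := fun a => Or.inl (hyx.trans heq.symm)
      rw [Finset.sum_congr rfl (fun a _ => by rw [if_pos ((hcond a).2 (this a))])]
      simp [cK, heq]
    · -- x < k : exactly one active choice
      have hylt : y.val < k.val := tailP_lt _ _ _ hgt
      have hyk : y ≠ k := fun h => absurd (congrArg Fin.val h) (Nat.ne_of_lt hylt)
      set a0 : Fin (k.val+1) := ⟨y.val, Nat.lt_succ_of_lt hylt⟩ with ha0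
      have hcond2 : ∀ a : Fin (k.val+1), (y = k ∨ y = emb k a) ↔ a = a0 := by
        intro a
        constructor
        · rintro (h | h)
          · exact absurd h hyk
          · exact Fin.ext (show a.val = a0.val from (congrArg Fin.val h).symm)
        · rintro rfl
          exact Or.inr (Fin.ext rfl)
      rw [Finset.sum_congr rfl (fun a _ => by rw [if_congr ((hcond a).trans (hcond2 a)) rfl rfl])]
      rw [Finset.sum_ite_eq' Finset.univ a0 (fun _ => (1:ℝ))]
      have : ¬ k.val < x.val := by omega
      have hne : k ≠ x := fun h => absurd (congrArg Fin.val h) (by omega)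
      simp [cK, this, hne]
  rw [Finset.sum_congr rfl (fun r _ => hinner r)]
  rw [Finset.sum_const, Finset.card_univ, nsmul_eq_mul]

end

section
variable {N : ℕ}

lemma card_split (k : Fin N) :
    N.factorial = (k.val + 1) *
      Fintype.card (∀ j : {j : Fin N // j ≠ k}, Fin ((j : Fin N).val + 1)) := by
  classical
  rw [← card_pi_eq (N := N),
    Fintype.card_congr (Equiv.piSplitAt k (fun j : Fin N => Fin (j.val + 1))),
    Fintype.card_prod, Fintype.card_fin]

end

/-- For every `x ∈ [N]`, the expected number of active locations for a
uniformly random permutation satisfies `(1/N!) ∑_π |A(π,x)| ≤ 1 + ln N − ln x`. -/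
theorem stmt7 {N : ℕ} (hN : 1 ≤ N) (x : Fin N) :
    (∑ π : Equiv.Perm (Fin N), ((activeSet π x).card : ℝ)) / (N.factorial : ℝ)
      ≤ 1 + Real.log N - Real.log ((x.val : ℝ) + 1) := by
  classical
  set R : Fin N → ℕ :=
    fun k => Fintype.card (∀ j : {j : Fin N // j ≠ k}, Fin ((j : Fin N).val + 1)) with hR
  have hS : (∑ π : Equiv.Perm (Fin N), ((activeSet π x).card : ℝ))
      = ∑ k : Fin N, (R k : ℝ) * cK x k := by
    rw [← Fintype.sum_equiv (Equiv.ofBijective Phi Phi_bijective)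
        (fun t => ((activeSet (Phi t) x).card : ℝ))
        (fun π => ((activeSet π x).card : ℝ)) (fun t => rfl)]
    have hcard : ∀ t : ∀ j : Fin N, Fin (j.val + 1), ((activeSet (Phi t) x).card : ℝ)
        = ∑ k : Fin N, if tailP t k x = k ∨ tailP t k x = emb k (t k) then (1:ℝ) else 0 := by
      intro t
      rw [activeSet_Phi, Finset.card_filter]
      push_cast
      rfl
    rw [Finset.sum_congr rfl (fun t _ => hcard t), Finset.sum_comm]
    exact Finset.sum_congr rfl (fun k _ => per_k x k)
  rw [hS, Finset.sum_div]
  have hRpos : ∀ k : Fin N, (0:ℝ) < R k := by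
    intro k
    have : 0 < R k := Fintype.card_pos_iff.2 ⟨fun j => ⟨0, Nat.succ_pos _⟩⟩
    exact_mod_cast this
  have hfac : ∀ k : Fin N, (N.factorial : ℝ) = (k.val + 1) * R k := by
    intro k
    exact_mod_cast congrArg (Nat.cast : ℕ → ℝ) (card_split k)
  have hdiv : ∀ k : Fin N, (R k : ℝ) * cK x k / (N.factorial : ℝ)
      = cK x k / (k.val + 1) := by
    intro k
    rw [hfac k, mul_comm ((k.val : ℝ) + 1) (R k : ℝ)]
    exact mul_div_mul_left _ _ (ne_of_gt (hRpos k))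
  rw [Finset.sum_congr rfl (fun k _ => hdiv k)]
  set F : ℕ → ℝ := fun i => if i < x.val then 0 else if i = x.val then 1 else 1/(i+1) with hF
  have hFk : ∀ k : Fin N, cK x k / (k.val + 1) = F k.val := by
    intro k
    unfold cK
    simp only [hF]
    by_cases h1 : k.val < x.val
    · simp [h1]
    · by_cases h2 : k = x
      · have h2' : k.val = x.val := congrArg Fin.val h2
        rw [if_neg h1, if_pos h2, if_neg h1, if_pos h2']
        exact div_self (by positivity)
      · have h2' : k.val ≠ x.val := fun h => h2 (Fin.ext h)
        rw [if_neg h1, if_neg h2, if_neg h1, if_neg h2']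
  rw [Finset.sum_congr rfl (fun k _ => hFk k)]
  rw [Fin.sum_univ_eq_sum_range F N]
  have hxN : x.val + 1 ≤ N := x.isLt
  rw [← Finset.sum_range_add_sum_Ico F hxN]
  have h1 : ∑ i ∈ Finset.range (x.val + 1), F i = 1 := by
    rw [Finset.sum_range_succ]
    have : ∑ i ∈ Finset.range x.val, F i = 0 := by
      apply Finset.sum_eq_zero
      intro i hi
      simp only [hF]
      rw [if_pos (Finset.mem_range.1 hi)]
    rw [this, zero_add]
    simp [hF]
  rw [h1]
  have h2 : ∑ i ∈ Finset.Ico (x.val + 1) N, F i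
      ≤ Real.log N - Real.log ((x.val : ℝ) + 1) := by
    have htele : ∑ i ∈ Finset.Ico (x.val + 1) N,
        (Real.log ((i:ℝ) + 1) - Real.log (i:ℝ)) = Real.log N - Real.log ((x.val : ℝ) + 1) := by
      have := Finset.sum_Ico_eq_sub
        (fun i => Real.log ((i:ℝ) + 1) - Real.log (i:ℝ)) hxN
      rw [this]
      have hr : ∀ n : ℕ, ∑ i ∈ Finset.range n, (Real.log ((i:ℝ) + 1) - Real.log (i:ℝ))
          = Real.log (n:ℝ) := by
        intro n
        have := Finset.sum_range_sub (fun i : ℕ => Real.log (i:ℝ)) n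
        simp only [Nat.cast_add, Nat.cast_one] at this
        rw [this, Nat.cast_zero, Real.log_zero, sub_zero]
      rw [hr N, hr (x.val + 1)]
      push_cast
      ring_nf
    rw [← htele]
    apply Finset.sum_le_sum
    intro i hi
    have hi1 : x.val + 1 ≤ i := (Finset.mem_Ico.1 hi).1
    have hipos : (0:ℝ) < i := by
      have : 1 ≤ i := le_trans (Nat.le_add_left 1 x.val) hi1
      exact_mod_cast this
    simp only [hF]
    rw [if_neg (by omega), if_neg (by omega)]
    have hlog := Real.log_le_sub_one_of_pos
      (show (0:ℝ) < (i:ℝ)/((i:ℝ)+1) by positivity)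
    rw [Real.log_div (ne_of_gt hipos) (by positivity)] at hlog
    have heq : (i:ℝ)/((i:ℝ)+1) - 1 = -(1/((i:ℝ)+1)) := by
      field_simp
      ring
    rw [heq] at hlog
    linarith
  linarith
end

section
/- For every x ∈ [N] and every subset Y ⊆ [N], the operator norm satisfies ‖Π^{Y,x} ∘ P_x‖ ≤ √(|Y|/x). -/
open scoped Classical

/-- `T N = ∏_{k=1}^N [k]`, the index set of the database. -/
abbrev T (N : ℕ) := ∀ k : Fin N, Fin (k.val + 1)

/-- The bounded operator on `ℓ²(ι)` (Euclidean space) associated with a matrix. -/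
noncomputable def toCLM {ι : Type*} [Fintype ι] [DecidableEq ι] (M : Matrix ι ι ℂ) :
    EuclideanSpace ℂ ι →L[ℂ] EuclideanSpace ℂ ι :=
  LinearMap.toContinuousLinearMap (Matrix.toEuclideanLin M)

/-- The matrix of the orthogonal projection `P_x` on `ℓ²(T)`, given by
`(P_x f)(t) = (1/x) ∑_{s=1}^{x} f(t_1,…,t_{x−1}, s, t_{x+1},…,t_N)`. -/
noncomputable def PxT {N : ℕ} (x : Fin N) : Matrix (T N) (T N) ℂ := fun t t' =>
  if ∀ j, j ≠ x → t j = t' j then ((x.val : ℂ) + 1)⁻¹ else 0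

/-- The matrix of the coordinate projection `Π^{Y,x}` onto functions supported on
`{t : Φ(t)(x) ∈ Y}`. -/
noncomputable def PiYx {N : ℕ} (Y : Finset (Fin N)) (x : Fin N) : Matrix (T N) (T N) ℂ :=
  fun t t' => if t = t' ∧ Phi t x ∈ Y then 1 else 0

/- ### Auxiliary combinatorial lemmas -/

lemma prod_fix_of_lt {N : ℕ} (t : T N) (x : Fin N) (L : List (Fin N))
    (hL : ∀ k ∈ L, k.val < x.val) :
    (L.map fun k => Equiv.swap k (emb k (t k))).prod x = x := by
  induction L with
  | nil => simp
  | cons a l ih =>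
    simp only [List.map_cons, List.prod_cons, Equiv.Perm.mul_apply]
    rw [ih (fun k hk => hL k (List.mem_cons_of_mem _ hk))]
    have ha := hL a List.mem_cons_self
    refine Equiv.swap_apply_of_ne_of_ne ?_ ?_
    · exact fun h => absurd (h ▸ ha) (lt_irrefl _)
    · intro h
      have : x.val = (t a).val := congrArg Fin.val h
      have := (t a).isLt
      omega

lemma mem_take_lt {N : ℕ} (x : Fin N) (k : Fin N)
    (hk : k ∈ (List.finRange N).take x.val) : k.val < x.val := by
  obtain ⟨i, hi, hik⟩ := List.mem_iff_getElem.mp hk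
  rw [List.getElem_take] at hik
  rw [List.getElem_finRange] at hik
  subst hik
  simp only [List.length_take, List.length_finRange, lt_min_iff] at hi
  simpa using hi.1

lemma mem_drop_gt {N : ℕ} (x : Fin N) (k : Fin N)
    (hk : k ∈ (List.finRange N).drop (x.val + 1)) : x.val < k.val := by
  obtain ⟨i, hi, hik⟩ := List.mem_iff_getElem.mp hk
  rw [List.getElem_drop] at hik
  rw [List.getElem_finRange] at hik
  subst hik
  simp only [Fin.coe_cast]
  omega

lemma finRange_split {N : ℕ} (x : Fin N) :
    List.finRange N = (List.finRange N).take x.val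
      ++ x :: (List.finRange N).drop (x.val + 1) := by
  have hx : x.val < (List.finRange N).length := by simp [x.isLt]
  have hg : (List.finRange N)[x.val] = x := by
    rw [List.getElem_finRange]; ext; simp
  have hd : List.drop x.val (List.finRange N) = x :: List.drop (x.val + 1) (List.finRange N) := by
    rw [List.drop_eq_getElem_cons hx, hg]
  rw [← hd, List.take_append_drop]

/-- The product of the swaps with indices `> x`. -/
noncomputable def P2 {N : ℕ} (t : T N) (x : Fin N) : Equiv.Perm (Fin N) :=
  (((List.finRange N).drop (x.val + 1)).reverse.map fun k => Equiv.swap k (emb k (t k))).prod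

lemma phi_update {N : ℕ} (t : T N) (x : Fin N) (s : Fin (x.val + 1)) :
    Phi (Function.update t x s) x = P2 t x (emb x s) := by
  set t' := Function.update t x s with ht'
  have hsplit := finRange_split x
  rw [Phi, hsplit]
  rw [List.reverse_append, List.reverse_cons, List.map_append, List.prod_append,
    List.map_append, List.prod_append, List.map_singleton, List.prod_singleton]
  simp only [Equiv.Perm.mul_apply]
  rw [prod_fix_of_lt t' x _ (fun k hk => mem_take_lt x k (List.mem_reverse.mp hk))]
  have ht'x : t' x = s := Function.update_self x s t
  rw [ht'x]
  rw [Equiv.swap_apply_left]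
  have hP2 : (((List.finRange N).drop (x.val + 1)).reverse.map
      fun k => Equiv.swap k (emb k (t' k))).prod = P2 t x := by
    rw [P2]
    congr 1
    apply List.map_congr_left
    intro k hk
    have : x.val < k.val := mem_drop_gt x k (List.mem_reverse.mp hk)
    have hne : k ≠ x := fun h => by subst h; omega
    rw [ht', Function.update_of_ne hne]
  rw [hP2]

lemma key_inj {N : ℕ} (t : T N) (x : Fin N) :
    Function.Injective (fun s : Fin (x.val + 1) => Phi (Function.update t x s) x) := by
  intro a b hab
  simp only [phi_update] at hab
  have h1 := (P2 t x).injective hab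
  have h2 : (emb x a).val = (emb x b).val := congrArg Fin.val h1
  exact Fin.ext h2

/- ### Auxiliary analytic lemmas -/

lemma toCLM_apply {ι : Type*} [Fintype ι] [DecidableEq ι] (M : Matrix ι ι ℂ)
    (f : EuclideanSpace ℂ ι) (i : ι) : toCLM M f i = ∑ j, M i j * f j := by
  simp [toCLM, Matrix.toEuclideanLin_apply, Matrix.mulVec, dotProduct]

noncomputable def eSplit {N : ℕ} (x : Fin N) :
    (Fin (x.val + 1) × ∀ j : {j : Fin N // j ≠ x}, Fin (j.val.val + 1)) ≃ T N :=
  (Equiv.piSplitAt x fun k : Fin N => Fin (k.val + 1)).symm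

lemma eSplit_x {N : ℕ} (x : Fin N) (v) (u) : eSplit x (v, u) x = v := by
  simp [eSplit, Equiv.piSplitAt_symm_apply]

lemma eSplit_ne {N : ℕ} (x : Fin N) (v) (u) (j : Fin N) (h : j ≠ x) :
    eSplit x (v, u) j = u ⟨j, h⟩ := by
  simp [eSplit, Equiv.piSplitAt_symm_apply, h]

lemma eSplit_update {N : ℕ} (x : Fin N) (v s) (u) :
    Function.update (eSplit x (v, u)) x s = eSplit x (s, u) := by
  funext j
  by_cases h : j = x
  · subst h; rw [Function.update_self, eSplit_x]
  · rw [Function.update_of_ne h, eSplit_ne _ _ _ _ h, eSplit_ne _ _ _ _ h]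

lemma update_inj {N : ℕ} (t : T N) (x : Fin N) :
    Function.Injective (fun s : Fin (x.val + 1) => Function.update t x s) := by
  intro a b h
  have := congrFun h x
  simpa [Function.update_self] using this

lemma PxT_apply {N : ℕ} (x : Fin N) (f : EuclideanSpace ℂ (T N)) (t : T N) :
    toCLM (PxT x) f t
      = ((x.val : ℂ) + 1)⁻¹ * ∑ s : Fin (x.val + 1), f (Function.update t x s) := by
  rw [toCLM_apply]
  have himg : (Finset.univ.filter (fun t' : T N => ∀ j, j ≠ x → t j = t' j))
      = Finset.image (fun s : Fin (x.val + 1) => Function.update t x s) Finset.univ := by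
    ext t'
    simp only [Finset.mem_filter, Finset.mem_univ, true_and, Finset.mem_image]
    constructor
    · intro h
      refine ⟨t' x, ?_⟩
      funext j
      by_cases hj : j = x
      · subst hj; rw [Function.update_self]
      · rw [Function.update_of_ne hj]; exact h j hj
    · rintro ⟨s, rfl⟩ j hj
      exact (Function.update_of_ne hj s t).symm
  calc ∑ t', PxT x t t' * f t'
      = ∑ t', if (∀ j, j ≠ x → t j = t' j) then ((x.val : ℂ) + 1)⁻¹ * f t' else 0 := by
        simp [PxT, ite_mul]
    _ = ∑ t' ∈ Finset.univ.filter (fun t' : T N => ∀ j, j ≠ x → t j = t' j),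
          ((x.val : ℂ) + 1)⁻¹ * f t' := by
        rw [Finset.sum_filter]
    _ = ∑ s : Fin (x.val + 1), ((x.val : ℂ) + 1)⁻¹ * f (Function.update t x s) := by
        rw [himg, Finset.sum_image (fun a _ b _ h => update_inj t x h)]
    _ = ((x.val : ℂ) + 1)⁻¹ * ∑ s : Fin (x.val + 1), f (Function.update t x s) := by
        rw [Finset.mul_sum]

lemma PiYx_apply {N : ℕ} (Y : Finset (Fin N)) (x : Fin N) (g : EuclideanSpace ℂ (T N))
    (t : T N) : toCLM (PiYx Y x) g t = if Phi t x ∈ Y then g t else 0 := by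
  rw [toCLM_apply]
  by_cases h : Phi t x ∈ Y
  · simp [PiYx, h, Finset.sum_ite_eq]
  · simp [PiYx, h]

/-- For every `x ∈ [N]` and every `Y ⊆ [N]`, the operator norm satisfies
`‖Π^{Y,x} ∘ P_x‖ ≤ √(|Y|/x)`. -/
theorem stmt12 {N : ℕ} (hN : 1 ≤ N) (x : Fin N) (Y : Finset (Fin N)) :
    ‖toCLM (PiYx Y x) ∘L toCLM (PxT x)‖
      ≤ Real.sqrt ((Y.card : ℝ) / ((x.val : ℝ) + 1)) := by
  have hxpos : (0 : ℝ) < (x.val : ℝ) + 1 := by positivity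
  set c : ℝ := (Y.card : ℝ) / ((x.val : ℝ) + 1) with hc
  have hc0 : 0 ≤ c := by positivity
  apply ContinuousLinearMap.opNorm_le_bound _ (Real.sqrt_nonneg _)
  intro f
  have hnorm2 : ∀ g : EuclideanSpace ℂ (T N), ‖g‖ ^ 2 = ∑ t, ‖g t‖ ^ 2 := fun g => by
    rw [EuclideanSpace.norm_eq, Real.sq_sqrt (Finset.sum_nonneg fun t _ => sq_nonneg _)]
  set g := (toCLM (PiYx Y x) ∘L toCLM (PxT x)) f with hg
  have hpoint : ∀ t : T N, ‖g t‖ ^ 2 ≤ (if Phi t x ∈ Y then (1 : ℝ) else 0)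
      * (((x.val : ℝ) + 1)⁻¹ * ∑ s : Fin (x.val + 1), ‖f (Function.update t x s)‖ ^ 2) := by
    intro t
    have hgt : g t = if Phi t x ∈ Y then
        ((x.val : ℂ) + 1)⁻¹ * ∑ s : Fin (x.val + 1), f (Function.update t x s) else 0 := by
      rw [hg]
      simp only [ContinuousLinearMap.comp_apply]
      rw [PiYx_apply, PxT_apply]
    rw [hgt]
    by_cases h : Phi t x ∈ Y
    · simp only [h, if_true, one_mul]
      rw [norm_mul, mul_pow]
      have hinv : ‖((x.val : ℂ) + 1)⁻¹‖ = ((x.val : ℝ) + 1)⁻¹ := by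
        rw [norm_inv]
        congr 1
        rw [show ((x.val : ℂ) + 1) = (((x.val + 1 : ℕ)) : ℂ) from by push_cast; ring,
          Complex.norm_natCast]
        push_cast; ring
      rw [hinv]
      have h1 : ‖∑ s : Fin (x.val + 1), f (Function.update t x s)‖ ^ 2
          ≤ ((x.val : ℝ) + 1) * ∑ s : Fin (x.val + 1), ‖f (Function.update t x s)‖ ^ 2 := by
        calc ‖∑ s : Fin (x.val + 1), f (Function.update t x s)‖ ^ 2
            ≤ (∑ s : Fin (x.val + 1), ‖f (Function.update t x s)‖) ^ 2 := by
              apply pow_le_pow_left₀ (norm_nonneg _) (norm_sum_le _ _)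
          _ ≤ ((Finset.univ : Finset (Fin (x.val + 1))).card : ℝ)
              * ∑ s : Fin (x.val + 1), ‖f (Function.update t x s)‖ ^ 2 :=
              sq_sum_le_card_mul_sum_sq
          _ = ((x.val : ℝ) + 1) * ∑ s : Fin (x.val + 1), ‖f (Function.update t x s)‖ ^ 2 := by
              norm_num
      calc (((x.val : ℝ) + 1)⁻¹) ^ 2 * ‖∑ s : Fin (x.val + 1), f (Function.update t x s)‖ ^ 2
          ≤ (((x.val : ℝ) + 1)⁻¹) ^ 2
            * (((x.val : ℝ) + 1) * ∑ s : Fin (x.val + 1), ‖f (Function.update t x s)‖ ^ 2) := by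
            apply mul_le_mul_of_nonneg_left h1 (by positivity)
        _ = ((x.val : ℝ) + 1)⁻¹ * ∑ s : Fin (x.val + 1), ‖f (Function.update t x s)‖ ^ 2 := by
            field_simp
    · simp [h]
  have hsum : ∑ t : T N, (if Phi t x ∈ Y then (1 : ℝ) else 0)
      * (((x.val : ℝ) + 1)⁻¹ * ∑ s : Fin (x.val + 1), ‖f (Function.update t x s)‖ ^ 2)
      ≤ c * ∑ t : T N, ‖f t‖ ^ 2 := by
    rw [← Equiv.sum_comp (eSplit x)]
    rw [← Equiv.sum_comp (eSplit x) (fun t => ‖f t‖ ^ 2)]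
    rw [Fintype.sum_prod_type, Fintype.sum_prod_type]
    rw [Finset.sum_comm]
    have hrw : ∀ (v : Fin (x.val + 1)) (u : ∀ j : {j : Fin N // j ≠ x}, Fin (j.val.val + 1)),
        (∑ s : Fin (x.val + 1), ‖f (Function.update (eSplit x (v, u)) x s)‖ ^ 2)
          = ∑ s : Fin (x.val + 1), ‖f (eSplit x (s, u))‖ ^ 2 := by
      intro v u
      apply Finset.sum_congr rfl
      intro s _
      rw [eSplit_update]
    have hstep : ∀ u, ∑ v : Fin (x.val + 1), (if Phi (eSplit x (v, u)) x ∈ Y then (1 : ℝ) else 0)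
        * (((x.val : ℝ) + 1)⁻¹ * ∑ s : Fin (x.val + 1), ‖f (eSplit x (s, u))‖ ^ 2)
        ≤ (Y.card : ℝ)
          * (((x.val : ℝ) + 1)⁻¹ * ∑ s : Fin (x.val + 1), ‖f (eSplit x (s, u))‖ ^ 2) := by
      intro u
      rw [← Finset.sum_mul]
      apply mul_le_mul_of_nonneg_right _ (by positivity)
      have hinj : Function.Injective (fun v : Fin (x.val + 1) => Phi (eSplit x (v, u)) x) := by
        have h0 : ∀ v : Fin (x.val + 1),
            eSplit x (v, u) = Function.update (eSplit x (⟨0, Nat.succ_pos _⟩, u)) x v :=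
          fun v => (eSplit_update x _ v u).symm
        have : (fun v : Fin (x.val + 1) => Phi (eSplit x (v, u)) x)
            = fun v => Phi (Function.update (eSplit x (⟨0, Nat.succ_pos _⟩, u)) x v) x := by
          funext v; rw [h0 v]
        rw [this]
        exact key_inj _ x
      rw [Finset.sum_boole]
      have hcard : (Finset.univ.filter
          (fun v : Fin (x.val + 1) => Phi (eSplit x (v, u)) x ∈ Y)).card ≤ Y.card := by
        apply Finset.card_le_card_of_injOn (fun v => Phi (eSplit x (v, u)) x)
        · intro v hv
          exact (Finset.mem_filter.mp hv).2
        · exact fun a _ b _ h => hinj h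
      exact_mod_cast hcard
    calc ∑ u : ∀ j : {j : Fin N // j ≠ x}, Fin (j.val.val + 1), ∑ v : Fin (x.val + 1),
          (if Phi (eSplit x (v, u)) x ∈ Y then (1 : ℝ) else 0)
          * (((x.val : ℝ) + 1)⁻¹ * ∑ s : Fin (x.val + 1), ‖f (Function.update (eSplit x (v, u)) x s)‖ ^ 2)
        = ∑ u, ∑ v : Fin (x.val + 1), (if Phi (eSplit x (v, u)) x ∈ Y then (1 : ℝ) else 0)
          * (((x.val : ℝ) + 1)⁻¹ * ∑ s : Fin (x.val + 1), ‖f (eSplit x (s, u))‖ ^ 2) :=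
          Finset.sum_congr rfl fun u _ => Finset.sum_congr rfl fun v _ => by rw [hrw]
      _ ≤ ∑ u, (Y.card : ℝ)
          * (((x.val : ℝ) + 1)⁻¹ * ∑ s : Fin (x.val + 1), ‖f (eSplit x (s, u))‖ ^ 2) :=
          Finset.sum_le_sum fun u _ => hstep u
      _ = c * ∑ v : Fin (x.val + 1), ∑ u, ‖f (eSplit x (v, u))‖ ^ 2 := by
          conv_rhs => rw [Finset.sum_comm]
          rw [hc, Finset.mul_sum]
          apply Finset.sum_congr rfl
          intro u _
          field_simp
  have hsq : ‖g‖ ^ 2 ≤ c * ‖f‖ ^ 2 := by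
    rw [hnorm2 g, hnorm2 f]
    exact le_trans (Finset.sum_le_sum fun t _ => hpoint t) hsum
  calc ‖g‖ = Real.sqrt (‖g‖ ^ 2) := (Real.sqrt_sq (norm_nonneg _)).symm
    _ ≤ Real.sqrt (c * ‖f‖ ^ 2) := Real.sqrt_le_sqrt hsq
    _ = Real.sqrt c * ‖f‖ := by rw [Real.sqrt_mul hc0, Real.sqrt_sq (norm_nonneg _)]
end

section
/- For every x ∈ [N], the twirled projection satisfies the operator identity (1/(N!)²) ∑_{σ ∈ S_N} ∑_{τ ∈ S_N} (L^τ R^σ)^† P_x (L^τ R^σ) = (1/x) I + (2(x−1)/x²) W^{(2)} + ((x−1)(x−2)/x²) W^{(3)} on ℓ²(S_N). -/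
open scoped Classical
open Matrix

namespace Aux13
variable {N : ℕ}

def Gp (t : ∀ k : Fin N, Fin (k.val + 1)) (l : List (Fin N)) : Equiv.Perm (Fin N) :=
  (l.map fun k => Equiv.swap k (emb k (t k))).prod

lemma emb_val (k : Fin N) (s : Fin (k.val+1)) : (emb k s).val = s.val := rfl

lemma emb_inj {k : Fin N} {s s' : Fin (k.val+1)} (h : emb k s = emb k s') : s = s' := by
  apply Fin.ext
  have : (emb k s).val = (emb k s').val := congrArg Fin.val h
  exact this

lemma emb_last (k : Fin N) : emb k (Fin.last k.val) = k := by
  apply Fin.ext; rfl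

lemma emb_ne {k : Fin N} {s : Fin (k.val+1)} (h : s ≠ Fin.last k.val) : emb k s ≠ k := by
  intro he
  apply h
  apply Fin.ext
  have : (emb k s).val = k.val := congrArg Fin.val he
  exact this

lemma Gp_nil (t : ∀ k : Fin N, Fin (k.val + 1)) : Gp t [] = 1 := rfl

lemma Gp_cons (t : ∀ k : Fin N, Fin (k.val + 1)) (k : Fin N) (l : List (Fin N)) :
    Gp t (k :: l) = Equiv.swap k (emb k (t k)) * Gp t l := by
  simp [Gp]

lemma Gp_append (t : ∀ k : Fin N, Fin (k.val + 1)) (l₁ l₂ : List (Fin N)) :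
    Gp t (l₁ ++ l₂) = Gp t l₁ * Gp t l₂ := by
  simp [Gp]

lemma Gp_fix (t : ∀ k : Fin N, Fin (k.val + 1)) :
    ∀ (l : List (Fin N)) (p : Fin N), (∀ j ∈ l, j < p) → Gp t l p = p := by
  intro l
  induction l with
  | nil => intro p _; rfl
  | cons k l ih =>
      intro p hp
      rw [Gp_cons, Equiv.Perm.mul_apply, ih p (fun j hj => hp j (List.mem_cons_of_mem _ hj))]
      have hk : k < p := hp k List.mem_cons_self
      apply Equiv.swap_apply_of_ne_of_ne
      · exact ne_of_gt hk
      · intro he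
        have : p.val ≤ k.val := by
          rw [he, emb_val]; exact Nat.lt_succ_iff.mp (t k).isLt
        exact absurd this (not_le.mpr hk)

lemma Gp_inj : ∀ (l : List (Fin N)), l.Pairwise (· > ·) →
    ∀ t t' : (∀ k : Fin N, Fin (k.val + 1)), Gp t l = Gp t' l → ∀ k ∈ l, t k = t' k := by
  intro l
  induction l with
  | nil => intro _ _ _ _ k hk; exact absurd hk List.not_mem_nil
  | cons a l ih =>
      intro hp t t' h k hk
      have ha : ∀ j ∈ l, j < a := fun j hj => (List.pairwise_cons.mp hp).1 j hj
      have hpl := (List.pairwise_cons.mp hp).2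
      have hva : Gp t (a :: l) a = emb a (t a) := by
        rw [Gp_cons, Equiv.Perm.mul_apply, Gp_fix t l a ha, Equiv.swap_apply_left]
      have hva' : Gp t' (a :: l) a = emb a (t' a) := by
        rw [Gp_cons, Equiv.Perm.mul_apply, Gp_fix t' l a ha, Equiv.swap_apply_left]
      have hta : t a = t' a := emb_inj (by rw [← hva, ← hva', h])
      have htail : Gp t l = Gp t' l := by
        have := h
        rw [Gp_cons, Gp_cons, hta] at this
        exact mul_left_cancel this
      rcases List.mem_cons.mp hk with rfl | hk'
      · exact hta
      · exact ih hpl t t' htail k hk'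

lemma finRange_rev_pairwise : ((List.finRange N).reverse).Pairwise (· > ·) :=
  List.pairwise_reverse.mpr (List.pairwise_lt_finRange N)

lemma Phi_eq_Gp (t : ∀ k : Fin N, Fin (k.val + 1)) : Phi t = Gp t (List.finRange N).reverse := rfl

lemma Phi_injective : Function.Injective (Phi (N := N)) := by
  intro t t' h
  funext k
  exact Gp_inj _ finRange_rev_pairwise t t' h k
    (by rw [List.mem_reverse]; exact List.mem_finRange k)

lemma card_pi_eq : Fintype.card (∀ k : Fin N, Fin (k.val + 1)) =
    Fintype.card (Equiv.Perm (Fin N)) := by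
  rw [Fintype.card_pi, Fintype.card_perm, Fintype.card_fin]
  simp only [Fintype.card_fin]
  rw [Fin.prod_univ_eq_prod_range (fun i => i + 1) N]
  exact Finset.prod_range_add_one_eq_factorial N

lemma Phi_bijective : Function.Bijective (Phi (N := N)) :=
  (Fintype.bijective_iff_injective_and_card _).mpr ⟨Phi_injective, card_pi_eq⟩

lemma Phi_tof (π : Equiv.Perm (Fin N)) : Phi (tof π) = π :=
  Function.invFun_eq (Phi_bijective.surjective π)

lemma tof_Phi (t : ∀ k : Fin N, Fin (k.val + 1)) : tof (Phi t) = t :=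
  Function.leftInverse_invFun Phi_injective t

end Aux13


namespace Aux13
variable {N : ℕ}

lemma split_desc : ∀ (l : List (Fin N)), l.Pairwise (· > ·) → ∀ x ∈ l,
    l = (l.filter fun j => decide (x < j)) ++ x :: (l.filter fun j => decide (j < x)) := by
  intro l
  induction l with
  | nil => intro _ x hx; exact absurd hx List.not_mem_nil
  | cons a l ih =>
      intro hp x hx
      have ha : ∀ j ∈ l, j < a := fun j hj => (List.pairwise_cons.mp hp).1 j hj
      have hpl := (List.pairwise_cons.mp hp).2
      rcases List.mem_cons.mp hx with rfl | hx'
      · have h1 : (l.filter fun j => decide (x < j)) = [] := by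
          rw [List.filter_eq_nil_iff]
          intro j hj
          simp only [decide_eq_true_eq]
          exact not_lt.mpr (le_of_lt (ha j hj))
        have h2 : ((x :: l).filter fun j => decide (x < j)) = [] := by
          rw [List.filter_cons_of_neg (by simp), h1]
        have h3 : ((x :: l).filter fun j => decide (j < x)) = l := by
          rw [List.filter_cons_of_neg (by simp), List.filter_eq_self.mpr]
          intro j hj; simp only [decide_eq_true_eq]; exact ha j hj
        rw [h2, h3]; rfl
      · have hax : x < a := ha x hx'
        have h2 : ((a :: l).filter fun j => decide (x < j))
            = a :: (l.filter fun j => decide (x < j)) := by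
          rw [List.filter_cons_of_pos (by simp [hax])]
        have h3 : ((a :: l).filter fun j => decide (j < x))
            = l.filter fun j => decide (j < x) := by
          rw [List.filter_cons_of_neg (by simp [not_lt.mpr (le_of_lt hax)])]
        rw [h2, h3, List.cons_append]
        exact congrArg (a :: ·) (ih hpl x hx')

lemma keyA (π : Equiv.Perm (Fin N)) (x : Fin N) :
    ptail π x * Equiv.swap x (emb x (tof π x)) * phead π x = π := by
  have hmem : x ∈ (List.finRange N).reverse := by
    rw [List.mem_reverse]; exact List.mem_finRange x
  have hsplit := split_desc _ finRange_rev_pairwise x hmem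
  have h1 : ptail π x = Gp (tof π) ((List.finRange N).reverse.filter fun j => decide (x < j)) := rfl
  have h2 : phead π x = Gp (tof π) ((List.finRange N).reverse.filter fun j => decide (j < x)) := rfl
  have h3 : π = Gp (tof π) (List.finRange N).reverse := by
    rw [← Phi_eq_Gp, Phi_tof]
  rw [h1, h2]
  conv_rhs => rw [h3, hsplit]
  rw [Gp_append, Gp_cons, mul_assoc]

lemma sum_tof_eq (x : Fin N) (F : Fin (x.val + 1) → ℂ) :
    ((x.val : ℂ) + 1) * ∑ π : Equiv.Perm (Fin N), F (tof π x)
      = (N.factorial : ℂ) * ∑ t : Fin (x.val + 1), F t := by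
  classical
  have e1 : ∑ π : Equiv.Perm (Fin N), F (tof π x)
      = ∑ u : (∀ k : Fin N, Fin (k.val + 1)), F (u x) := by
    rw [← Equiv.sum_comp (Equiv.ofBijective Phi Phi_bijective) (fun π => F (tof π x))]
    apply Finset.sum_congr rfl
    intro u _
    simp [Equiv.ofBijective, tof_Phi]
  have e2 : ∑ u : (∀ k : Fin N, Fin (k.val + 1)), F (u x)
      = (Fintype.card (∀ k : {k : Fin N // k ≠ x}, Fin (k.val.val + 1)) : ℂ)
          * ∑ t : Fin (x.val + 1), F t := by
    rw [← Equiv.sum_comp (Equiv.piSplitAt x (fun k : Fin N => Fin (k.val + 1))).symm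
      (fun u => F (u x))]
    have : ∀ p : (Fin (x.val + 1) × ∀ k : {k : Fin N // k ≠ x}, Fin (k.val.val + 1)),
        ((Equiv.piSplitAt x (fun k : Fin N => Fin (k.val + 1))).symm p) x = p.1 := by
      intro p; simp [Equiv.piSplitAt]
    rw [Finset.sum_congr rfl fun p _ => congrArg F (this p)]
    rw [Fintype.sum_prod_type, Finset.mul_sum]
    apply Finset.sum_congr rfl
    intro t _
    simp [Finset.sum_const, Finset.card_univ, mul_comm]
  have e3 : (x.val + 1) * Fintype.card (∀ k : {k : Fin N // k ≠ x}, Fin (k.val.val + 1))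
      = N.factorial := by
    have := Fintype.card_congr (Equiv.piSplitAt x (fun k : Fin N => Fin (k.val + 1)))
    rw [Fintype.card_prod, Fintype.card_fin] at this
    rw [← this, card_pi_eq, Fintype.card_perm, Fintype.card_fin]
  rw [e1, e2, ← mul_assoc]
  congr 1
  have := congrArg (Nat.cast : ℕ → ℂ) e3
  push_cast at this ⊢
  linear_combination this


-- counting conjugators
noncomputable def Kc (g h : Equiv.Perm (Fin N)) : ℕ :=
  (Finset.univ.filter fun τ : Equiv.Perm (Fin N) => τ * g * τ⁻¹ = h).card

lemma Kc_conj (g h a : Equiv.Perm (Fin N)) : Kc g (a * h * a⁻¹) = Kc g h := by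
  apply Finset.card_bij' (fun τ _ => a⁻¹ * τ) (fun τ _ => a * τ)
  · intro τ hτ
    simp only [Finset.mem_filter, Finset.mem_univ, true_and] at hτ ⊢
    have h2 := congrArg (fun z => a⁻¹ * z * a) hτ
    simp only [_root_.mul_inv_rev] at h2 ⊢
    group at h2 ⊢
    convert h2 using 1 <;> group
  · intro τ hτ
    simp only [Finset.mem_filter, Finset.mem_univ, true_and] at hτ ⊢
    have h2 := congrArg (fun z => a * z * a⁻¹) hτ
    simp only [_root_.mul_inv_rev] at h2 ⊢
    group at h2 ⊢
    convert h2 using 1 <;> group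
  · intro τ _; simp [mul_assoc]
  · intro τ _; simp [mul_assoc]

lemma Kc_sum (g : Equiv.Perm (Fin N)) :
    ∑ h : Equiv.Perm (Fin N), Kc g h = N.factorial := by
  have := Finset.card_eq_sum_card_fiberwise
    (f := fun τ : Equiv.Perm (Fin N) => τ * g * τ⁻¹) (s := Finset.univ) (t := Finset.univ)
    (fun τ _ => Finset.mem_univ _)
  have h2 : (Finset.univ : Finset (Equiv.Perm (Fin N))).card = N.factorial := by
    rw [Finset.card_univ, Fintype.card_perm, Fintype.card_fin]
  rw [← h2, this]
  rfl

lemma Kc_ne_card (g h : Equiv.Perm (Fin N)) (hne : h.support.card ≠ g.support.card) :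
    Kc g h = 0 := by
  rw [Kc, Finset.card_eq_zero, Finset.filter_eq_empty_iff]
  intro τ _
  intro he
  apply hne
  rw [← he, Equiv.Perm.card_support_conj]

lemma Kc_one_ne (g h : Equiv.Perm (Fin N)) (hg : g ≠ 1) (hh : h = 1) : Kc g h = 0 := by
  rw [Kc, Finset.card_eq_zero, Finset.filter_eq_empty_iff]
  intro τ _ he
  apply hg
  have : τ * g * τ⁻¹ = 1 := by rw [he, hh]
  have := congrArg (fun z => τ⁻¹ * z * τ) this
  simpa [mul_assoc] using this

lemma Kc_isConj (g h : Equiv.Perm (Fin N)) (hc : IsConj g h) : Kc g h = Kc g g := by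
  rw [isConj_iff] at hc
  obtain ⟨a, ha⟩ := hc
  rw [← ha, Kc_conj]

lemma Kc_class (g : Equiv.Perm (Fin N)) (hg : g.IsCycle) (m : ℕ) (hm : g.support.card = m) :
    ((Finset.univ.filter fun γ : Equiv.Perm (Fin N) =>
        γ.IsCycle ∧ γ.support.card = m).card) * Kc g g = N.factorial := by
  classical
  rw [← Kc_sum g]
  rw [← Finset.sum_filter_add_sum_filter_not Finset.univ
    (fun γ : Equiv.Perm (Fin N) => γ.IsCycle ∧ γ.support.card = m) (Kc g)]
  have h0 : ∑ h ∈ Finset.univ.filter (fun γ : Equiv.Perm (Fin N) =>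
      ¬(γ.IsCycle ∧ γ.support.card = m)), Kc g h = 0 := by
    apply Finset.sum_eq_zero
    intro h hh
    simp only [Finset.mem_filter, Finset.mem_univ, true_and] at hh
    by_contra hne
    have : ∃ τ : Equiv.Perm (Fin N), τ * g * τ⁻¹ = h := by
      have := Finset.card_pos.mp (Nat.pos_of_ne_zero hne)
      obtain ⟨τ, hτ⟩ := this
      simp only [Finset.mem_filter, Finset.mem_univ, true_and] at hτ
      exact ⟨τ, hτ⟩
    obtain ⟨τ, hτ⟩ := this
    apply hh
    constructor
    · rw [← hτ]; exact hg.conj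
    · rw [← hτ, Equiv.Perm.card_support_conj, hm]
  have h1 : ∑ h ∈ Finset.univ.filter (fun γ : Equiv.Perm (Fin N) =>
      γ.IsCycle ∧ γ.support.card = m), Kc g h
      = (Finset.univ.filter fun γ : Equiv.Perm (Fin N) =>
        γ.IsCycle ∧ γ.support.card = m).card * Kc g g := by
    rw [Finset.sum_congr rfl (fun h hh => ?_), Finset.sum_const, smul_eq_mul]
    simp only [Finset.mem_filter, Finset.mem_univ, true_and] at hh
    exact Kc_isConj g h (hg.isConj hh.1 (by rw [hm, hh.2]))
  rw [h0, h1, add_zero]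

end Aux13



/-- The matrix of the unitary `L^τ` on `ℓ²(S_N)`, `L^τ|π⟩ = |τπ⟩`. -/
noncomputable def Lmat {N : ℕ} (τ : Equiv.Perm (Fin N)) :
    Matrix (Equiv.Perm (Fin N)) (Equiv.Perm (Fin N)) ℂ := fun ρ π =>
  if ρ = τ * π then 1 else 0

/-- The matrix of the unitary `R^σ` on `ℓ²(S_N)`, `R^σ|π⟩ = |πσ⁻¹⟩`. -/
noncomputable def Rmat {N : ℕ} (σ : Equiv.Perm (Fin N)) :
    Matrix (Equiv.Perm (Fin N)) (Equiv.Perm (Fin N)) ℂ := fun ρ π =>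
  if ρ = π * σ⁻¹ then 1 else 0

/-- The matrix of the orthogonal projection `P_x` on `ℓ²(S_N)`, determined by
`P_x|π⟩ = (1/x) ∑_{s=1}^{x} |π_{>x} (x s) π_{<x}⟩`. -/
noncomputable def PxPerm {N : ℕ} (x : Fin N) :
    Matrix (Equiv.Perm (Fin N)) (Equiv.Perm (Fin N)) ℂ := fun ρ π =>
  if ∃ s : Fin (x.val + 1), ρ = ptail π x * Equiv.swap x (emb x s) * phead π x then
    ((x.val : ℂ) + 1)⁻¹
  else 0

/-- `W^{(ℓ)}`, the average of `R^γ` over all `ℓ`-cycles `γ ∈ S_N`. -/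
noncomputable def Wmat {N : ℕ} (l : ℕ) :
    Matrix (Equiv.Perm (Fin N)) (Equiv.Perm (Fin N)) ℂ :=
  (((Finset.univ.filter fun γ : Equiv.Perm (Fin N) =>
        γ.IsCycle ∧ γ.support.card = l).card : ℂ))⁻¹ •
    ∑ γ ∈ Finset.univ.filter
        (fun γ : Equiv.Perm (Fin N) => γ.IsCycle ∧ γ.support.card = l),
      Rmat γ

namespace Aux13
variable {N : ℕ}

def dd (x : Fin N) (s t : Fin (x.val + 1)) : Equiv.Perm (Fin N) :=
  Equiv.swap x (emb x s) * Equiv.swap x (emb x t)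

lemma swap_emb_inj {x : Fin N} {s s' : Fin (x.val + 1)}
    (h : Equiv.swap x (emb x s) = Equiv.swap x (emb x s')) : s = s' := by
  apply emb_inj
  have := congrArg (fun f : Equiv.Perm (Fin N) => f x) h
  simpa [Equiv.swap_apply_left] using this

lemma dd_self (x : Fin N) (t : Fin (x.val + 1)) : dd x t t = 1 := by
  simp [dd]

lemma dd_eq_one_iff {x : Fin N} {s t : Fin (x.val + 1)} : dd x s t = 1 ↔ s = t := by
  constructor
  · intro h
    apply swap_emb_inj (x := x)
    have : Equiv.swap x (emb x s) = (Equiv.swap x (emb x t))⁻¹ := by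
      rw [eq_inv_iff_mul_eq_one]; exact h
    rwa [Equiv.swap_inv] at this
  · rintro rfl; exact dd_self x _

lemma dd_last_right (x : Fin N) (s : Fin (x.val + 1)) :
    dd x s (Fin.last x.val) = Equiv.swap x (emb x s) := by
  rw [dd, emb_last, Equiv.swap_self]
  rfl

lemma dd_last_left (x : Fin N) (t : Fin (x.val + 1)) :
    dd x (Fin.last x.val) t = Equiv.swap x (emb x t) := by
  rw [dd, emb_last, Equiv.swap_self]
  exact one_mul _

lemma swap_emb_isCycle {x : Fin N} {s : Fin (x.val + 1)} (hs : s ≠ Fin.last x.val) :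
    (Equiv.swap x (emb x s)).IsCycle :=
  Equiv.Perm.isCycle_swap (Ne.symm (emb_ne hs))

lemma swap_emb_card {x : Fin N} {s : Fin (x.val + 1)} (hs : s ≠ Fin.last x.val) :
    (Equiv.swap x (emb x s)).support.card = 2 :=
  Equiv.Perm.card_support_eq_two.mpr ⟨x, emb x s, Ne.symm (emb_ne hs), rfl⟩

lemma dd_three {x : Fin N} {s t : Fin (x.val + 1)} (hs : s ≠ Fin.last x.val)
    (ht : t ≠ Fin.last x.val) (hst : s ≠ t) : (dd x s t).IsThreeCycle := by
  apply Equiv.Perm.isThreeCycle_swap_mul_swap_same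
  · exact Ne.symm (emb_ne hs)
  · exact Ne.symm (emb_ne ht)
  · intro h; exact hst (emb_inj h)

lemma LR_apply (τ σ a b : Equiv.Perm (Fin N)) :
    (Lmat τ * Rmat σ) a b = if a = τ * b * σ⁻¹ then 1 else 0 := by
  rw [Matrix.mul_apply]
  simp [Lmat, Rmat, mul_assoc]

lemma conj_entry (A : Matrix (Equiv.Perm (Fin N)) (Equiv.Perm (Fin N)) ℂ)
    (τ σ ρ π : Equiv.Perm (Fin N)) :
    ((Lmat τ * Rmat σ)ᴴ * A * (Lmat τ * Rmat σ)) ρ π = A (τ * ρ * σ⁻¹) (τ * π * σ⁻¹) := by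
  rw [Matrix.mul_apply]
  have h1 : ∀ j, (Lmat τ * Rmat σ) j π = if j = τ * π * σ⁻¹ then (1:ℂ) else 0 :=
    fun j => LR_apply τ σ j π
  calc ∑ j, ((Lmat τ * Rmat σ)ᴴ * A) ρ j * (Lmat τ * Rmat σ) j π
      = ∑ j, if j = τ * π * σ⁻¹ then ((Lmat τ * Rmat σ)ᴴ * A) ρ j else 0 := by
        apply Finset.sum_congr rfl; intro j _; rw [h1 j]; split <;> simp
    _ = ((Lmat τ * Rmat σ)ᴴ * A) ρ (τ * π * σ⁻¹) := by
        rw [Finset.sum_ite_eq' Finset.univ]; simp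
    _ = A (τ * ρ * σ⁻¹) (τ * π * σ⁻¹) := by
        rw [Matrix.mul_apply]
        have h2 : ∀ i, (Lmat τ * Rmat σ)ᴴ ρ i = if i = τ * ρ * σ⁻¹ then (1:ℂ) else 0 := by
          intro i
          rw [Matrix.conjTranspose_apply, LR_apply]
          split <;> simp_all
        calc ∑ i, (Lmat τ * Rmat σ)ᴴ ρ i * A i (τ * π * σ⁻¹)
            = ∑ i, if i = τ * ρ * σ⁻¹ then A i (τ * π * σ⁻¹) else 0 := by
              apply Finset.sum_congr rfl; intro i _; rw [h2 i]; split <;> simp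
          _ = A (τ * ρ * σ⁻¹) (τ * π * σ⁻¹) := by
              rw [Finset.sum_ite_eq' Finset.univ]; simp

lemma Wmat_apply (l : ℕ) (ρ π : Equiv.Perm (Fin N)) :
    Wmat l ρ π = (((Finset.univ.filter fun γ : Equiv.Perm (Fin N) =>
        γ.IsCycle ∧ γ.support.card = l).card : ℂ))⁻¹ *
      (if (ρ⁻¹ * π).IsCycle ∧ (ρ⁻¹ * π).support.card = l then 1 else 0) := by
  rw [Wmat, Matrix.smul_apply, Matrix.sum_apply, smul_eq_mul]
  congr 1
  have hcond : ∀ γ : Equiv.Perm (Fin N), (ρ = π * γ⁻¹) ↔ (γ = ρ⁻¹ * π) := by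
    intro γ
    constructor
    · intro h; rw [h]; group
    · intro h; rw [h]; group
  calc ∑ γ ∈ Finset.univ.filter (fun γ : Equiv.Perm (Fin N) =>
          γ.IsCycle ∧ γ.support.card = l), Rmat γ ρ π
      = ∑ γ ∈ Finset.univ.filter (fun γ : Equiv.Perm (Fin N) =>
          γ.IsCycle ∧ γ.support.card = l), if γ = ρ⁻¹ * π then (1:ℂ) else 0 := by
        apply Finset.sum_congr rfl
        intro γ _
        rw [Rmat]
        simp only [hcond γ]
    _ = if (ρ⁻¹ * π).IsCycle ∧ (ρ⁻¹ * π).support.card = l then 1 else 0 := by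
        rw [Finset.sum_ite_eq' ]
        simp only [Finset.mem_filter, Finset.mem_univ, true_and]

lemma grp_aux {G : Type*} [Group G] (u w v π' h cs : G) (hkey : u * w * v = π')
    (hw : w * w = 1) : h * π' = u * cs * v ↔ h = u * (cs * w) * u⁻¹ := by
  subst hkey
  constructor
  · intro h1
    have h2 : (h * u * w) * v = (u * cs) * v := by rw [← h1]; group
    have h3 : h * u * w = u * cs := mul_right_cancel h2
    have h4 : h * u * (w * w) = u * cs * w := by rw [← mul_assoc, h3]
    rw [hw, mul_one] at h4
    have : h = (h * u) * u⁻¹ := by group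
    rw [this, h4]; group
  · intro h1
    rw [h1]
    have : u * (cs * w) * u⁻¹ * (u * w * v) = u * cs * ((w * w) * v) := by group
    rw [this, hw, one_mul]

lemma Px_apply' (x : Fin N) (h π' : Equiv.Perm (Fin N)) :
    PxPerm x (h * π') π' = ((x.val : ℂ) + 1)⁻¹ *
      (if ∃ s : Fin (x.val + 1),
          h = ptail π' x * dd x s (tof π' x) * (ptail π' x)⁻¹ then 1 else 0) := by
  rw [PxPerm]
  have hiff : (∃ s : Fin (x.val + 1),
      h * π' = ptail π' x * Equiv.swap x (emb x s) * phead π' x) ↔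
      (∃ s : Fin (x.val + 1), h = ptail π' x * dd x s (tof π' x) * (ptail π' x)⁻¹) := by
    apply exists_congr
    intro s
    rw [dd]
    exact grp_aux (ptail π' x) (Equiv.swap x (emb x (tof π' x))) (phead π' x) π' h
      (Equiv.swap x (emb x s)) (keyA π' x) (Equiv.swap_mul_self _ _)
  simp only [hiff]
  split <;> simp

lemma ite_exists_eq_sum {n : ℕ} (c : Fin n → Equiv.Perm (Fin N)) (hc : Function.Injective c)
    (h : Equiv.Perm (Fin N)) :
    (if ∃ s, h = c s then (1:ℂ) else 0) = ∑ s, if h = c s then (1:ℂ) else 0 := by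
  by_cases hex : ∃ s, h = c s
  · obtain ⟨s0, rfl⟩ := hex
    rw [if_pos ⟨s0, rfl⟩]
    rw [Finset.sum_eq_single s0]
    · simp
    · intro s _ hs
      rw [if_neg]
      intro he
      exact hs (hc he.symm)

    · intro hs0; exact absurd (Finset.mem_univ s0) hs0
  · rw [if_neg hex]
    symm
    apply Finset.sum_eq_zero
    intro s _
    rw [if_neg (fun he => hex ⟨s, he⟩)]

end Aux13


namespace Aux13
variable {N : ℕ}

lemma lhs_entry (x : Fin N) (ρ π : Equiv.Perm (Fin N)) :
    ∑ σ : Equiv.Perm (Fin N), ∑ τ : Equiv.Perm (Fin N),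
      ((Lmat τ * Rmat σ)ᴴ * PxPerm x * (Lmat τ * Rmat σ)) ρ π
    = (N.factorial : ℂ) * (((x.val : ℂ) + 1) * ((x.val : ℂ) + 1))⁻¹ *
        ∑ t : Fin (x.val + 1), ∑ s : Fin (x.val + 1), (Kc (ρ * π⁻¹) (dd x s t) : ℂ) := by
  classical
  have X0 : ((x.val : ℂ) + 1) ≠ 0 := Nat.cast_add_one_ne_zero x.val
  calc ∑ σ : Equiv.Perm (Fin N), ∑ τ : Equiv.Perm (Fin N),
      ((Lmat τ * Rmat σ)ᴴ * PxPerm x * (Lmat τ * Rmat σ)) ρ π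
      = ∑ τ : Equiv.Perm (Fin N), ∑ σ : Equiv.Perm (Fin N),
          PxPerm x (τ * ρ * σ⁻¹) (τ * π * σ⁻¹) := by
        rw [Finset.sum_comm]
        exact Finset.sum_congr rfl fun τ _ => Finset.sum_congr rfl fun σ _ =>
          conj_entry (PxPerm x) τ σ ρ π
    _ = ∑ τ : Equiv.Perm (Fin N), ∑ π' : Equiv.Perm (Fin N),
          PxPerm x ((τ * (ρ * π⁻¹) * τ⁻¹) * π') π' := by
        apply Finset.sum_congr rfl
        intro τ _
        rw [← Equiv.sum_comp ((Equiv.inv (Equiv.Perm (Fin N))).trans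
          (Equiv.mulLeft (τ * π))) (fun π' => PxPerm x ((τ * (ρ * π⁻¹) * τ⁻¹) * π') π')]
        apply Finset.sum_congr rfl
        intro σ _
        have he : ((Equiv.inv (Equiv.Perm (Fin N))).trans (Equiv.mulLeft (τ * π))) σ
            = τ * π * σ⁻¹ := by
          simp [Equiv.trans_apply, mul_assoc]
        rw [he]
        congr 1
        group
    _ = ∑ τ : Equiv.Perm (Fin N), ∑ π' : Equiv.Perm (Fin N), ((x.val : ℂ) + 1)⁻¹ *
          ∑ s : Fin (x.val + 1), (if τ * (ρ * π⁻¹) * τ⁻¹ =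
            ptail π' x * dd x s (tof π' x) * (ptail π' x)⁻¹ then (1:ℂ) else 0) := by
        apply Finset.sum_congr rfl
        intro τ _
        apply Finset.sum_congr rfl
        intro π' _
        rw [Px_apply']
        congr 1
        apply ite_exists_eq_sum
        intro s s' hss
        have h1 : dd x s (tof π' x) = dd x s' (tof π' x) := by
          have := mul_right_cancel hss
          exact mul_left_cancel this
        rw [dd, dd] at h1
        exact swap_emb_inj (mul_right_cancel h1)
    _ = ((x.val : ℂ) + 1)⁻¹ * ∑ π' : Equiv.Perm (Fin N), ∑ s : Fin (x.val + 1),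
          ∑ τ : Equiv.Perm (Fin N), (if τ * (ρ * π⁻¹) * τ⁻¹ =
            ptail π' x * dd x s (tof π' x) * (ptail π' x)⁻¹ then (1:ℂ) else 0) := by
        rw [Finset.sum_congr rfl fun τ _ => (Finset.mul_sum Finset.univ _ _).symm,
          ← Finset.mul_sum]
        congr 1
        rw [Finset.sum_comm]
        exact Finset.sum_congr rfl fun π' _ => Finset.sum_comm
    _ = ((x.val : ℂ) + 1)⁻¹ * ∑ π' : Equiv.Perm (Fin N), ∑ s : Fin (x.val + 1),
          (Kc (ρ * π⁻¹) (dd x s (tof π' x)) : ℂ) := by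
        congr 1
        apply Finset.sum_congr rfl
        intro π' _
        apply Finset.sum_congr rfl
        intro s _
        rw [Finset.sum_boole]
        congr 1
        rw [← Kc_conj (ρ * π⁻¹) (dd x s (tof π' x)) (ptail π' x)]
        rfl
    _ = (N.factorial : ℂ) * (((x.val : ℂ) + 1) * ((x.val : ℂ) + 1))⁻¹ *
        ∑ t : Fin (x.val + 1), ∑ s : Fin (x.val + 1), (Kc (ρ * π⁻¹) (dd x s t) : ℂ) := by
        have hst := sum_tof_eq x
          (fun t => ∑ s : Fin (x.val + 1), (Kc (ρ * π⁻¹) (dd x s t) : ℂ))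
        set A := ∑ π' : Equiv.Perm (Fin N), ∑ s : Fin (x.val + 1),
          (Kc (ρ * π⁻¹) (dd x s (tof π' x)) : ℂ) with hA
        set B := ∑ t : Fin (x.val + 1), ∑ s : Fin (x.val + 1),
          (Kc (ρ * π⁻¹) (dd x s t) : ℂ) with hB
        field_simp
        linear_combination hst

end Aux13


namespace Aux13
variable {N : ℕ}

lemma Kc_one_left (h : Equiv.Perm (Fin N)) :
    Kc (1 : Equiv.Perm (Fin N)) h = if h = 1 then N.factorial else 0 := by
  rw [Kc]
  by_cases hh : h = 1
  · rw [if_pos hh]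
    have : (Finset.univ.filter fun τ : Equiv.Perm (Fin N) => τ * 1 * τ⁻¹ = h)
        = Finset.univ := by
      apply Finset.filter_true_of_mem
      intro τ _
      simp [hh]
    rw [this, Finset.card_univ, Fintype.card_perm, Fintype.card_fin]
  · rw [if_neg hh, Finset.card_eq_zero, Finset.filter_eq_empty_iff]
    intro τ _ he
    apply hh
    rw [← he]
    simp

lemma sum_dd_one (x : Fin N) :
    ∑ t : Fin (x.val + 1), ∑ s : Fin (x.val + 1),
      (Kc (1 : Equiv.Perm (Fin N)) (dd x s t) : ℂ)
    = ((x.val : ℂ) + 1) * (N.factorial : ℂ) := by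
  have hin : ∀ t : Fin (x.val + 1), ∑ s : Fin (x.val + 1),
      (Kc (1 : Equiv.Perm (Fin N)) (dd x s t) : ℂ) = (N.factorial : ℂ) := by
    intro t
    rw [Finset.sum_eq_single t]
    · rw [Kc_one_left, if_pos (dd_self x t)]
    · intro s _ hst
      rw [Kc_one_left, if_neg (fun hc => hst (dd_eq_one_iff.mp hc))]
      simp
    · intro hh; exact absurd (Finset.mem_univ t) hh
  rw [Finset.sum_congr rfl fun t _ => hin t, Finset.sum_const, Finset.card_univ,
    Fintype.card_fin, nsmul_eq_mul]
  push_cast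
  ring

lemma card_erase_last (x : Fin N) :
    ((Finset.univ : Finset (Fin (x.val + 1))).erase (Fin.last x.val)).card = x.val := by
  rw [Finset.card_erase_of_mem (Finset.mem_univ _), Finset.card_univ, Fintype.card_fin]
  omega

lemma sum_dd_two (x : Fin N) (g : Equiv.Perm (Fin N)) (hc : g.IsCycle)
    (h2 : g.support.card = 2) :
    ∑ t : Fin (x.val + 1), ∑ s : Fin (x.val + 1), (Kc g (dd x s t) : ℂ)
    = 2 * (x.val : ℂ) * (Kc g g : ℂ) := by
  classical
  set L := Fin.last x.val with hL
  have hKid : ∀ t : Fin (x.val + 1), Kc g (dd x t t) = 0 := fun t =>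
    Kc_one_ne g _ hc.ne_one (dd_self x t)
  have hK2r : ∀ s : Fin (x.val + 1), s ≠ L → Kc g (dd x s L) = Kc g g := by
    intro s hs
    rw [dd_last_right]
    exact Kc_isConj g _ (hc.isConj (swap_emb_isCycle hs) (by rw [h2, swap_emb_card hs]))
  have hK2l : ∀ t : Fin (x.val + 1), t ≠ L → Kc g (dd x L t) = Kc g g := by
    intro t ht
    rw [dd_last_left]
    exact Kc_isConj g _ (hc.isConj (swap_emb_isCycle ht) (by rw [h2, swap_emb_card ht]))
  have hK3 : ∀ s t : Fin (x.val + 1), s ≠ t → s ≠ L → t ≠ L → Kc g (dd x s t) = 0 := by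
    intro s t hst hs ht
    apply Kc_ne_card
    rw [h2, (dd_three hs ht hst).card_support]
    omega
  have hFL : ∑ s : Fin (x.val + 1), (Kc g (dd x s L) : ℂ) = (x.val : ℂ) * (Kc g g : ℂ) := by
    rw [← Finset.add_sum_erase _ _ (Finset.mem_univ L), hKid L]
    rw [Finset.sum_congr rfl (fun s hs => by
      rw [hK2r s (Finset.ne_of_mem_erase hs)])]
    rw [Finset.sum_const, card_erase_last, nsmul_eq_mul]
    simp
  have hFt : ∀ t : Fin (x.val + 1), t ≠ L →
      ∑ s : Fin (x.val + 1), (Kc g (dd x s t) : ℂ) = (Kc g g : ℂ) := by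
    intro t ht
    rw [← Finset.add_sum_erase _ _ (Finset.mem_univ L), hK2l t ht]
    rw [Finset.sum_congr rfl (fun s hs => by
      by_cases hst : s = t
      · rw [hst, hKid t]
      · rw [hK3 s t hst (Finset.ne_of_mem_erase hs) ht]), Finset.sum_const]
    simp
  rw [← Finset.add_sum_erase _ _ (Finset.mem_univ L), hFL]
  rw [Finset.sum_congr rfl (fun t ht => hFt t (Finset.ne_of_mem_erase ht)),
    Finset.sum_const, card_erase_last, nsmul_eq_mul]
  ring

lemma sum_dd_three (x : Fin N) (g : Equiv.Perm (Fin N)) (hc : g.IsCycle)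
    (h3 : g.support.card = 3) :
    ∑ t : Fin (x.val + 1), ∑ s : Fin (x.val + 1), (Kc g (dd x s t) : ℂ)
    = (x.val : ℂ) * ((x.val : ℂ) - 1) * (Kc g g : ℂ) := by
  classical
  set L := Fin.last x.val with hL
  have hKid : ∀ t : Fin (x.val + 1), Kc g (dd x t t) = 0 := fun t =>
    Kc_one_ne g _ hc.ne_one (dd_self x t)
  have hK2r : ∀ s : Fin (x.val + 1), s ≠ L → Kc g (dd x s L) = 0 := by
    intro s hs
    rw [dd_last_right]
    apply Kc_ne_card
    rw [h3, swap_emb_card hs]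
    omega
  have hK2l : ∀ t : Fin (x.val + 1), t ≠ L → Kc g (dd x L t) = 0 := by
    intro t ht
    rw [dd_last_left]
    apply Kc_ne_card
    rw [h3, swap_emb_card ht]
    omega
  have hK3 : ∀ s t : Fin (x.val + 1), s ≠ t → s ≠ L → t ≠ L → Kc g (dd x s t) = Kc g g := by
    intro s t hst hs ht
    apply Kc_isConj
    exact hc.isConj (dd_three hs ht hst).isCycle (by rw [h3, (dd_three hs ht hst).card_support])
  have hFL : ∑ s : Fin (x.val + 1), (Kc g (dd x s L) : ℂ) = 0 := by
    apply Finset.sum_eq_zero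
    intro s _
    by_cases hs : s = L
    · rw [hs, hKid L, Nat.cast_zero]
    · rw [hK2r s hs, Nat.cast_zero]
  have hFt : ∀ t : Fin (x.val + 1), t ≠ L →
      ∑ s : Fin (x.val + 1), (Kc g (dd x s t) : ℂ)
        = ((x.val - 1 : ℕ) : ℂ) * (Kc g g : ℂ) := by
    intro t ht
    rw [← Finset.add_sum_erase _ _ (Finset.mem_univ L), hK2l t ht, Nat.cast_zero, zero_add]
    rw [← Finset.add_sum_erase _ _ (Finset.mem_erase.mpr ⟨ht, Finset.mem_univ t⟩), hKid t,
      Nat.cast_zero, zero_add]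
    rw [Finset.sum_congr rfl (fun s hs => by
      have h1 := Finset.mem_erase.mp hs
      have h2 := Finset.mem_erase.mp h1.2
      rw [hK3 s t h1.1 h2.1 ht])]
    rw [Finset.sum_const, nsmul_eq_mul]
    congr 2
    rw [Finset.card_erase_of_mem (Finset.mem_erase.mpr ⟨ht, Finset.mem_univ t⟩),
      card_erase_last]
  rw [← Finset.add_sum_erase _ _ (Finset.mem_univ L), hFL, zero_add]
  rw [Finset.sum_congr rfl (fun t ht => hFt t (Finset.ne_of_mem_erase ht)),
    Finset.sum_const, card_erase_last, nsmul_eq_mul]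
  rcases Nat.eq_zero_or_pos x.val with h0 | h0
  · rw [h0]; simp
  · rw [Nat.cast_sub h0, Nat.cast_one]
    ring

lemma sum_dd_other (x : Fin N) (g : Equiv.Perm (Fin N)) (hg1 : g ≠ 1)
    (h2 : g.support.card ≠ 2) (h3 : g.support.card ≠ 3) :
    ∑ t : Fin (x.val + 1), ∑ s : Fin (x.val + 1), (Kc g (dd x s t) : ℂ) = 0 := by
  apply Finset.sum_eq_zero
  intro t _
  apply Finset.sum_eq_zero
  intro s _
  rw [Nat.cast_eq_zero]
  by_cases hst : s = t
  · rw [hst]; exact Kc_one_ne g _ hg1 (dd_self x t)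
  by_cases hs : s = Fin.last x.val
  · rw [hs]
    by_cases ht : t = Fin.last x.val
    · exact absurd (hs.trans ht.symm) hst
    · rw [dd_last_left]
      exact Kc_ne_card g _ (by rw [swap_emb_card ht]; omega)
  by_cases ht : t = Fin.last x.val
  · rw [ht, dd_last_right]
    exact Kc_ne_card g _ (by rw [swap_emb_card hs]; omega)
  · exact Kc_ne_card g _ (by rw [(dd_three hs ht hst).card_support]; omega)

end Aux13



open Aux13

/-- For every `x ∈ [N]`,
`(1/(N!)²) ∑_{σ,τ} (L^τ R^σ)† P_x (L^τ R^σ)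
  = (1/x) I + (2(x−1)/x²) W^{(2)} + ((x−1)(x−2)/x²) W^{(3)}` on `ℓ²(S_N)`. -/
theorem stmt13 {N : ℕ} (hN : 3 ≤ N) (x : Fin N) :
    (((N.factorial : ℂ)) ^ 2)⁻¹ •
        ∑ σ : Equiv.Perm (Fin N), ∑ τ : Equiv.Perm (Fin N),
          (Lmat τ * Rmat σ)ᴴ * PxPerm x * (Lmat τ * Rmat σ)
      = ((x.val : ℂ) + 1)⁻¹ • (1 : Matrix (Equiv.Perm (Fin N)) (Equiv.Perm (Fin N)) ℂ)
        + ((2 * (x.val : ℂ)) / ((x.val : ℂ) + 1) ^ 2) • Wmat 2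
        + (((x.val : ℂ) * ((x.val : ℂ) - 1)) / ((x.val : ℂ) + 1) ^ 2) • Wmat 3 := by
  classical
  have hNf : (N.factorial : ℂ) ≠ 0 := Nat.cast_ne_zero.mpr N.factorial_ne_zero
  have X0 : ((x.val : ℂ) + 1) ≠ 0 := Nat.cast_add_one_ne_zero x.val
  ext ρ π
  simp only [Matrix.smul_apply, Matrix.sum_apply, Matrix.add_apply, smul_eq_mul]
  rw [lhs_entry x ρ π, Wmat_apply, Wmat_apply]
  by_cases hb1 : ρ = π
  · subst hb1
    have hg1 : ρ * ρ⁻¹ = 1 := by group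
    have hb1' : ρ⁻¹ * ρ = 1 := by group
    rw [hg1, sum_dd_one x, hb1', Matrix.one_apply_eq]
    rw [if_neg (fun hcc => Equiv.Perm.not_isCycle_one hcc.1),
      if_neg (fun hcc => Equiv.Perm.not_isCycle_one hcc.1)]
    simp only [mul_zero, add_zero, mul_one]
    field_simp
  · have hgb : ρ * π⁻¹ = ρ * (ρ⁻¹ * π)⁻¹ * ρ⁻¹ := by group
    have hgne : ρ * π⁻¹ ≠ 1 := fun h => hb1 (by
      have := congrArg (· * π) h
      simpa [mul_assoc] using this)
    have hcard : (ρ * π⁻¹).support.card = (ρ⁻¹ * π).support.card := by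
      rw [hgb, Equiv.Perm.card_support_conj, Equiv.Perm.support_inv]
    rw [Matrix.one_apply_ne hb1, mul_zero]
    by_cases h2 : (ρ⁻¹ * π).support.card = 2
    · have hbc : (ρ⁻¹ * π).IsCycle := (Equiv.Perm.card_support_eq_two.mp h2).isCycle
      have hgc : (ρ * π⁻¹).IsCycle := by rw [hgb]; exact (hbc.inv).conj
      have hg2 : (ρ * π⁻¹).support.card = 2 := hcard.trans h2
      rw [sum_dd_two x _ hgc hg2]
      have hclass := Kc_class (ρ * π⁻¹) hgc 2 hg2
      have hclassC : ((Finset.univ.filter fun γ : Equiv.Perm (Fin N) =>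
          γ.IsCycle ∧ γ.support.card = 2).card : ℂ) * (Kc (ρ * π⁻¹) (ρ * π⁻¹) : ℂ)
          = (N.factorial : ℂ) := by exact_mod_cast congrArg (Nat.cast : ℕ → ℂ) hclass
      have hC2 : ((Finset.univ.filter fun γ : Equiv.Perm (Fin N) =>
          γ.IsCycle ∧ γ.support.card = 2).card : ℂ) ≠ 0 := by
        intro h
        rw [h, zero_mul] at hclassC
        exact hNf hclassC.symm
      rw [if_pos ⟨hbc, h2⟩, if_neg (fun hcc : _ ∧ _ => by have := hcc.2; omega)]
      simp only [mul_zero, mul_one, add_zero, zero_add]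
      set C : ℂ := ((Finset.univ.filter fun γ : Equiv.Perm (Fin N) =>
          γ.IsCycle ∧ γ.support.card = 2).card : ℂ) with hCdef
      have hZC : (Kc (ρ * π⁻¹) (ρ * π⁻¹) : ℂ) = (N.factorial : ℂ) / C := by
        rw [eq_div_iff hC2]
        linear_combination hclassC
      rw [hZC]
      field_simp
    · by_cases h3 : (ρ⁻¹ * π).support.card = 3
      · have hbc : (ρ⁻¹ * π).IsCycle := (card_support_eq_three_iff.mp h3).isCycle
        have hgc : (ρ * π⁻¹).IsCycle := by rw [hgb]; exact (hbc.inv).conj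
        have hg3 : (ρ * π⁻¹).support.card = 3 := hcard.trans h3
        rw [sum_dd_three x _ hgc hg3]
        have hclass := Kc_class (ρ * π⁻¹) hgc 3 hg3
        have hclassC : ((Finset.univ.filter fun γ : Equiv.Perm (Fin N) =>
            γ.IsCycle ∧ γ.support.card = 3).card : ℂ) * (Kc (ρ * π⁻¹) (ρ * π⁻¹) : ℂ)
            = (N.factorial : ℂ) := by exact_mod_cast congrArg (Nat.cast : ℕ → ℂ) hclass
        have hC3 : ((Finset.univ.filter fun γ : Equiv.Perm (Fin N) =>
            γ.IsCycle ∧ γ.support.card = 3).card : ℂ) ≠ 0 := by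
          intro h
          rw [h, zero_mul] at hclassC
          exact hNf hclassC.symm
        rw [if_neg (fun hcc : _ ∧ _ => by have := hcc.2; omega), if_pos ⟨hbc, h3⟩]
        simp only [mul_zero, mul_one, add_zero, zero_add]
        set C : ℂ := ((Finset.univ.filter fun γ : Equiv.Perm (Fin N) =>
            γ.IsCycle ∧ γ.support.card = 3).card : ℂ) with hCdef
        have hZC : (Kc (ρ * π⁻¹) (ρ * π⁻¹) : ℂ) = (N.factorial : ℂ) / C := by
          rw [eq_div_iff hC3]
          linear_combination hclassC
        rw [hZC]
        field_simp
      · rw [sum_dd_other x _ hgne (by omega) (by omega)]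
        rw [if_neg (fun hcc : _ ∧ _ => h2 hcc.2), if_neg (fun hcc : _ ∧ _ => h3 hcc.2)]
        simp
end
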